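/- arXiv:0905.2914 — 5 statements merged into one kernel-verified Lean document; each statement's English description precedes it below -/
import Mathlib

section
/- Let φ ∈ C²((0,∞); ℝ) and F > 0. Then for every u ∈ 𝒰, E_a''(y_F)[u,u] = A_F ‖u'‖²_{ℓ²_ε} − ε² φ''(2F) ‖u''‖²_{ℓ²_ε}, where u' and u'' denote the (2N-periodic) backward difference and centered second difference of u. -/
open Finset Real

noncomputable section

/-- The index set `{-N+1, ..., N}` of one period. -/
def idx (N : ℕ) : Finset ℤ := Finset.Icc (-(N : ℤ) + 1) (N : ℤ)

/-- The space 𝒰 of 2N-periodic displacements with zero mean. -/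
def uSet (N : ℕ) : Set (ℤ → ℝ) :=
  {u | (∀ ℓ : ℤ, u (ℓ + 2 * (N : ℤ)) = u ℓ) ∧ ∑ ℓ ∈ idx N, u ℓ = 0}

/-- Backward difference `v'_ℓ = ε⁻¹ (v_ℓ - v_{ℓ-1})`, with `ε = 1/N`. -/
def bD (N : ℕ) (v : ℤ → ℝ) (ℓ : ℤ) : ℝ := (N : ℝ) * (v ℓ - v (ℓ - 1))

/-- Centered second difference `v''_ℓ = ε⁻² (v_{ℓ+1} - 2 v_ℓ + v_{ℓ-1})`. -/
def cD2 (N : ℕ) (v : ℤ → ℝ) (ℓ : ℤ) : ℝ := (N : ℝ) ^ 2 * (v (ℓ + 1) - 2 * v ℓ + v (ℓ - 1))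

/-- Weighted ℓ²-norm. -/
def nl2 (N : ℕ) (v : ℤ → ℝ) : ℝ := Real.sqrt ((N : ℝ)⁻¹ * ∑ ℓ ∈ idx N, (v ℓ) ^ 2)

/-- Weighted ℓ¹-norm. -/
def nl1 (N : ℕ) (v : ℤ → ℝ) : ℝ := (N : ℝ)⁻¹ * ∑ ℓ ∈ idx N, |v ℓ|

/-- ℓ∞-norm over one period. -/
def nlinf (N : ℕ) (v : ℤ → ℝ) : ℝ := ⨆ ℓ : {ℓ : ℤ // ℓ ∈ idx N}, |v ℓ.1|

/-- Weighted ℓ²-inner product. -/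
def iprod (N : ℕ) (u v : ℤ → ℝ) : ℝ := (N : ℝ)⁻¹ * ∑ ℓ ∈ idx N, u ℓ * v ℓ

/-- The uniform deformation `(y_F)_ℓ = F ℓ ε`. -/
def yF (N : ℕ) (F : ℝ) : ℤ → ℝ := fun ℓ => F * (ℓ : ℝ) * (N : ℝ)⁻¹

/-- First variation `E'(y)[u]`. -/
def dE (E : (ℤ → ℝ) → ℝ) (y u : ℤ → ℝ) : ℝ := deriv (fun t : ℝ => E (y + t • u)) 0

/-- Second variation `E''(y)[u,v]`. -/
def d2E (E : (ℤ → ℝ) → ℝ) (y u v : ℤ → ℝ) : ℝ :=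
  deriv (fun s : ℝ => deriv (fun t : ℝ => E (y + s • u + t • v)) 0) 0

/-- The atomistic energy. -/
def Ea (N : ℕ) (φ : ℝ → ℝ) (y : ℤ → ℝ) : ℝ :=
  (N : ℝ)⁻¹ * ∑ ℓ ∈ idx N, (φ (bD N y ℓ) + φ (bD N y ℓ + bD N y (ℓ + 1)))

/-- The local QC (continuum) energy. -/
def Eqcl (N : ℕ) (φ : ℝ → ℝ) (y : ℤ → ℝ) : ℝ :=
  (N : ℝ)⁻¹ * ∑ ℓ ∈ idx N, (φ (bD N y ℓ) + φ (2 * bD N y ℓ))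

/-- The QNL atomistic region `{-K-1, ..., K+1}`. -/
def aQnl (K : ℕ) : Finset ℤ := Finset.Icc (-(K : ℤ) - 1) ((K : ℤ) + 1)

/-- The quasi-nonlocal QC energy. -/
def Eqnl (N K : ℕ) (φ : ℝ → ℝ) (y : ℤ → ℝ) : ℝ :=
  (N : ℝ)⁻¹ * ((∑ ℓ ∈ idx N, φ (bD N y ℓ))
    + (∑ ℓ ∈ aQnl K, φ (bD N y ℓ + bD N y (ℓ + 1)))
    + ∑ ℓ ∈ idx N \ aQnl K, (φ (2 * bD N y ℓ) + φ (2 * bD N y (ℓ + 1))) / 2)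

/-- The QCE atomistic region `{-K, ..., K}`. -/
def aQce (K : ℕ) : Finset ℤ := Finset.Icc (-(K : ℤ)) (K : ℤ)

/-- Atomistic energy contribution of atom ℓ. -/
def eAtom (N : ℕ) (φ : ℝ → ℝ) (y : ℤ → ℝ) (ℓ : ℤ) : ℝ :=
  (φ (bD N y ℓ) + φ (bD N y (ℓ + 1)) + φ (bD N y (ℓ - 1) + bD N y ℓ)
    + φ (bD N y (ℓ + 1) + bD N y (ℓ + 2))) / 2

/-- Continuum energy contribution of atom ℓ. -/
def eCont (N : ℕ) (φ : ℝ → ℝ) (y : ℤ → ℝ) (ℓ : ℤ) : ℝ :=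
  (φ (bD N y ℓ) + φ (bD N y (ℓ + 1)) + φ (2 * bD N y ℓ) + φ (2 * bD N y (ℓ + 1))) / 2

/-- The energy-based QC energy. -/
def Eqce (N K : ℕ) (φ : ℝ → ℝ) (y : ℤ → ℝ) : ℝ :=
  (N : ℝ)⁻¹ * ((∑ ℓ ∈ idx N \ aQce K, eCont N φ y ℓ) + ∑ ℓ ∈ aQce K, eAtom N φ y ℓ)

/-- The prescribed backward difference `ĝ'` of the ghost-force corrector. -/
def ghatD (K : ℕ) (ℓ : ℤ) : ℝ :=
  if ℓ = -(K : ℤ) - 1 ∨ ℓ = (K : ℤ) + 2 then -(1 / 2)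
  else if ℓ = -(K : ℤ) + 1 ∨ ℓ = (K : ℤ) then 1 / 2 else 0

/-- `μ_ε = 2 sin(π ε / 2) / ε` with `ε = 1/N`. -/
def muEps (N : ℕ) : ℝ := 2 * Real.sin (Real.pi * (N : ℝ)⁻¹ / 2) / (N : ℝ)⁻¹

/-- The `𝒰^{-1,∞}`-norm of a functional `T` on 𝒰. -/
def dualNorm (N : ℕ) (T : (ℤ → ℝ) → ℝ) : ℝ :=
  sSup {r : ℝ | ∃ v ∈ uSet N, nl1 N (bD N v) = 1 ∧ r = T v}

lemma sum_shift_one (N : ℕ) (hN : 1 ≤ N) (f : ℤ → ℝ)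
    (hf : ∀ ℓ : ℤ, f (ℓ + 2 * (N : ℤ)) = f ℓ) :
    ∑ ℓ ∈ idx N, f (ℓ + 1) = ∑ ℓ ∈ idx N, f ℓ := by
  have hN' : (1 : ℤ) ≤ (N : ℤ) := by exact_mod_cast hN
  have h1 : ∑ ℓ ∈ idx N, f (ℓ + 1)
      = ∑ ℓ ∈ Finset.Icc (-(N:ℤ) + 2) ((N:ℤ) + 1), f ℓ := by
    have : Finset.Icc (-(N:ℤ) + 2) ((N:ℤ) + 1)
        = (idx N).map (addRightEmbedding 1) := by
      rw [idx, Finset.map_add_right_Icc]; congr 1; ring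
    rw [this, Finset.sum_map]; rfl
  have h2 : Finset.Icc (-(N:ℤ) + 2) ((N:ℤ) + 1)
      = insert ((N:ℤ) + 1) (Finset.Icc (-(N:ℤ) + 2) (N:ℤ)) := by
    ext x; simp only [Finset.mem_Icc, Finset.mem_insert]; omega
  have h3 : idx N = insert (-(N:ℤ) + 1) (Finset.Icc (-(N:ℤ) + 2) (N:ℤ)) := by
    ext x; simp only [idx, Finset.mem_Icc, Finset.mem_insert]; omega
  have hnm1 : ((N:ℤ) + 1) ∉ Finset.Icc (-(N:ℤ) + 2) (N:ℤ) := by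
    simp only [Finset.mem_Icc]; omega
  have hnm2 : (-(N:ℤ) + 1) ∉ Finset.Icc (-(N:ℤ) + 2) (N:ℤ) := by
    simp only [Finset.mem_Icc]; omega
  rw [h1, h2, Finset.sum_insert hnm1, h3, Finset.sum_insert hnm2]
  have : f ((N:ℤ) + 1) = f (-(N:ℤ) + 1) := by
    have := hf (-(N:ℤ) + 1); rw [← this]; congr 1; ring
  rw [this]

lemma key (c : ℝ) (S : Finset ℤ) (a b : ℤ → ℝ) {φ : ℝ → ℝ}
    (hφ : ContDiffOn ℝ 2 φ (Set.Ioi 0)) {F : ℝ} (hF : 0 < F) :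
    deriv (fun s : ℝ => deriv (fun t : ℝ =>
        c * ∑ ℓ ∈ S, (φ (F + (s + t) * a ℓ) + φ (2 * F + (s + t) * b ℓ))) 0) 0
      = c * ∑ ℓ ∈ S, (deriv (deriv φ) F * (a ℓ) ^ 2 + deriv (deriv φ) (2 * F) * (b ℓ) ^ 2) := by
  set C : ℝ := 1 + ∑ ℓ ∈ S, (|a ℓ| + |b ℓ|) with hCdef
  have hsum_nonneg : (0:ℝ) ≤ ∑ ℓ ∈ S, (|a ℓ| + |b ℓ|) :=
    Finset.sum_nonneg fun ℓ _ => by positivity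
  have hC : 0 < C := by simp only [hCdef]; linarith
  have hbound : ∀ ℓ ∈ S, |a ℓ| ≤ C ∧ |b ℓ| ≤ C := by
    intro ℓ hℓ
    have h1 : |a ℓ| + |b ℓ| ≤ ∑ j ∈ S, (|a j| + |b j|) :=
      Finset.single_le_sum (f := fun j => |a j| + |b j|) (fun j _ => by positivity) hℓ
    constructor <;> [skip; skip] <;>
      · simp only [hCdef]
        have := abs_nonneg (a ℓ); have := abs_nonneg (b ℓ); linarith
  set δ : ℝ := F / C with hδdef
  have hδ : 0 < δ := div_pos hF hC
  have hpos : ∀ r : ℝ, |r| < δ → ∀ ℓ ∈ S,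
      0 < F + r * a ℓ ∧ 0 < 2 * F + r * b ℓ := by
    intro r hr ℓ hℓ
    have hra : |r * a ℓ| < F := by
      rw [abs_mul]
      calc |r| * |a ℓ| ≤ |r| * C := by
            exact mul_le_mul_of_nonneg_left (hbound ℓ hℓ).1 (abs_nonneg r)
        _ < δ * C := by exact mul_lt_mul_of_pos_right hr hC
        _ = F := by rw [hδdef]; field_simp
    have hrb : |r * b ℓ| < F := by
      rw [abs_mul]
      calc |r| * |b ℓ| ≤ |r| * C := by
            exact mul_le_mul_of_nonneg_left (hbound ℓ hℓ).2 (abs_nonneg r)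
        _ < δ * C := by exact mul_lt_mul_of_pos_right hr hC
        _ = F := by rw [hδdef]; field_simp
    have h1 := neg_abs_le (r * a ℓ)
    have h2 := neg_abs_le (r * b ℓ)
    constructor <;> nlinarith
  have hdφ : DifferentiableOn ℝ φ (Set.Ioi 0) := hφ.differentiableOn (by norm_num)
  have hd2 : DifferentiableOn ℝ (deriv φ) (Set.Ioi 0) :=
    (hφ.deriv_of_isOpen (m := 1) isOpen_Ioi (by norm_num)).differentiableOn (by norm_num)
  set G : ℝ → ℝ := fun r =>
    c * ∑ ℓ ∈ S, (φ (F + r * a ℓ) + φ (2 * F + r * b ℓ)) with hGdef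
  set G1 : ℝ → ℝ := fun r =>
    c * ∑ ℓ ∈ S, (deriv φ (F + r * a ℓ) * a ℓ + deriv φ (2 * F + r * b ℓ) * b ℓ) with hG1def
  have hG : ∀ r : ℝ, |r| < δ → HasDerivAt G (G1 r) r := by
    intro r hr
    apply HasDerivAt.const_mul
    apply HasDerivAt.fun_sum
    intro ℓ hℓ
    obtain ⟨hpa, hpb⟩ := hpos r hr ℓ hℓ
    have hina : HasDerivAt (fun x : ℝ => F + x * a ℓ) (a ℓ) r := by
      simpa using ((hasDerivAt_id r).mul_const (a ℓ)).const_add F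
    have hinb : HasDerivAt (fun x : ℝ => 2 * F + x * b ℓ) (b ℓ) r := by
      simpa using ((hasDerivAt_id r).mul_const (b ℓ)).const_add (2 * F)
    have houta : HasDerivAt φ (deriv φ (F + r * a ℓ)) (F + r * a ℓ) :=
      (hdφ.differentiableAt (isOpen_Ioi.mem_nhds hpa)).hasDerivAt
    have houtb : HasDerivAt φ (deriv φ (2 * F + r * b ℓ)) (2 * F + r * b ℓ) :=
      (hdφ.differentiableAt (isOpen_Ioi.mem_nhds hpb)).hasDerivAt
    exact (houta.comp r hina).add (houtb.comp r hinb)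
  have h2F : (0:ℝ) < 2 * F := by linarith
  have hG1 : HasDerivAt G1
      (c * ∑ ℓ ∈ S, (deriv (deriv φ) F * (a ℓ) ^ 2 + deriv (deriv φ) (2 * F) * (b ℓ) ^ 2)) 0 := by
    have : HasDerivAt G1
        (c * ∑ ℓ ∈ S, (deriv (deriv φ) (F + 0 * a ℓ) * a ℓ * a ℓ
          + deriv (deriv φ) (2 * F + 0 * b ℓ) * b ℓ * b ℓ)) 0 := by
      apply HasDerivAt.const_mul
      apply HasDerivAt.fun_sum
      intro ℓ hℓ
      have hina : HasDerivAt (fun x : ℝ => F + x * a ℓ) (a ℓ) 0 := by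
        simpa using ((hasDerivAt_id (0:ℝ)).mul_const (a ℓ)).const_add F
      have hinb : HasDerivAt (fun x : ℝ => 2 * F + x * b ℓ) (b ℓ) 0 := by
        simpa using ((hasDerivAt_id (0:ℝ)).mul_const (b ℓ)).const_add (2 * F)
      have houta : HasDerivAt (deriv φ) (deriv (deriv φ) (F + 0 * a ℓ)) (F + 0 * a ℓ) := by
        refine (hd2.differentiableAt (isOpen_Ioi.mem_nhds ?_)).hasDerivAt
        simpa using hF
      have houtb : HasDerivAt (deriv φ) (deriv (deriv φ) (2 * F + 0 * b ℓ))
          (2 * F + 0 * b ℓ) := by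
        refine (hd2.differentiableAt (isOpen_Ioi.mem_nhds ?_)).hasDerivAt
        simpa using h2F
      exact ((houta.comp 0 hina).mul_const (a ℓ)).add ((houtb.comp 0 hinb).mul_const (b ℓ))
    convert this using 2
    apply Finset.sum_congr rfl
    intro ℓ _
    rw [show F + 0 * a ℓ = F by ring, show (2*F) + 0 * b ℓ = 2*F by ring]
    ring
  have hinner : ∀ s : ℝ, |s| < δ → deriv (fun t : ℝ => G (s + t)) 0 = G1 s := by
    intro s hs
    have hadd : HasDerivAt (fun t : ℝ => s + t) 1 0 := by
      simpa using (hasDerivAt_id (0:ℝ)).const_add s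
    have hGs : HasDerivAt G (G1 s) (s + 0) := by
      rw [add_zero]; exact hG s hs
    have h := (hGs.comp 0 hadd).deriv
    simp only [mul_one] at h
    exact h
  have heq : (fun s : ℝ => deriv (fun t : ℝ => G (s + t)) 0) =ᶠ[nhds 0] G1 := by
    filter_upwards [Metric.ball_mem_nhds (0:ℝ) hδ] with s hs
    rw [Metric.mem_ball, Real.dist_eq, sub_zero] at hs
    exact hinner s hs
  calc deriv (fun s : ℝ => deriv (fun t : ℝ =>
        c * ∑ ℓ ∈ S, (φ (F + (s + t) * a ℓ) + φ (2 * F + (s + t) * b ℓ))) 0) 0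
      = deriv (fun s : ℝ => deriv (fun t : ℝ => G (s + t)) 0) 0 := rfl
    _ = deriv G1 0 := heq.deriv_eq
    _ = _ := hG1.deriv

theorem stmt1 (N : ℕ) (hN : 2 ≤ N) (φ : ℝ → ℝ)
    (hφ : ContDiffOn ℝ 2 φ (Set.Ioi 0)) (F : ℝ) (hF : 0 < F) :
    ∀ u ∈ uSet N,
      d2E (Ea N φ) (yF N F) u u
        = (deriv (deriv φ) F + 4 * deriv (deriv φ) (2 * F)) * (nl2 N (bD N u)) ^ 2
          - (N : ℝ)⁻¹ ^ 2 * deriv (deriv φ) (2 * F) * (nl2 N (cD2 N u)) ^ 2 := by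
  intro u hu
  obtain ⟨hper, -⟩ := hu
  have hN0 : (N : ℝ) ≠ 0 := Nat.cast_ne_zero.mpr (by omega)
  have hbDp : ∀ ℓ : ℤ, bD N u (ℓ + 2 * (N:ℤ)) = bD N u ℓ := by
    intro ℓ
    have h1 : u (ℓ + 2 * (N:ℤ) - 1) = u (ℓ - 1) := by
      rw [show ℓ + 2 * (N:ℤ) - 1 = ℓ - 1 + 2 * (N:ℤ) by ring, hper (ℓ - 1)]
    simp only [bD, hper ℓ, h1]
  have hbD : ∀ s t : ℝ, ∀ ℓ : ℤ, bD N (yF N F + s • u + t • u) ℓ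
      = F + (s + t) * bD N u ℓ := by
    intro s t ℓ
    simp only [bD, yF, Pi.add_apply, Pi.smul_apply, smul_eq_mul]
    push_cast
    field_simp
    ring
  have hfun : (fun s : ℝ => deriv (fun t : ℝ => Ea N φ (yF N F + s • u + t • u)) 0)
      = fun s : ℝ => deriv (fun t : ℝ => (N:ℝ)⁻¹ * ∑ ℓ ∈ idx N,
          (φ (F + (s + t) * bD N u ℓ)
            + φ (2 * F + (s + t) * (bD N u ℓ + bD N u (ℓ + 1))))) 0 := by
    funext s
    congr 1
    funext t
    simp only [Ea]
    congr 1
    apply Finset.sum_congr rfl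
    intro ℓ _
    rw [hbD s t ℓ, hbD s t (ℓ + 1)]
    congr 1
    congr 1
    ring
  rw [d2E, hfun, key (N:ℝ)⁻¹ (idx N) (bD N u) (fun ℓ => bD N u ℓ + bD N u (ℓ + 1)) hφ hF]
  have hnl2a : nl2 N (bD N u) ^ 2 = (N:ℝ)⁻¹ * ∑ ℓ ∈ idx N, (bD N u ℓ) ^ 2 := by
    rw [nl2, Real.sq_sqrt]
    positivity
  have hnl2c : nl2 N (cD2 N u) ^ 2 = (N:ℝ)⁻¹ * ∑ ℓ ∈ idx N, (cD2 N u ℓ) ^ 2 := by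
    rw [nl2, Real.sq_sqrt]
    positivity
  have hshift : ∑ ℓ ∈ idx N, (bD N u (ℓ + 1)) ^ 2 = ∑ ℓ ∈ idx N, (bD N u ℓ) ^ 2 :=
    sum_shift_one N (by omega) (fun ℓ => (bD N u ℓ) ^ 2) (fun ℓ => by show bD N u (ℓ + 2 * (N:ℤ)) ^ 2 = bD N u ℓ ^ 2; rw [hbDp ℓ])
  have hkey2 : ∀ ℓ : ℤ, (bD N u ℓ + bD N u (ℓ + 1)) ^ 2
      = 2 * (bD N u ℓ) ^ 2 + 2 * (bD N u (ℓ + 1)) ^ 2 - (N:ℝ)⁻¹ ^ 2 * (cD2 N u ℓ) ^ 2 := by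
    intro ℓ
    have hc : (N:ℝ)⁻¹ * cD2 N u ℓ = bD N u (ℓ + 1) - bD N u ℓ := by
      simp only [cD2, bD, add_sub_cancel_right]
      field_simp
      ring
    have h2 : (N:ℝ)⁻¹ ^ 2 * (cD2 N u ℓ) ^ 2 = (bD N u (ℓ + 1) - bD N u ℓ) ^ 2 := by
      rw [← hc]; ring
    rw [h2]; ring
  have hSb : ∑ ℓ ∈ idx N, (bD N u ℓ + bD N u (ℓ + 1)) ^ 2
      = 4 * (∑ ℓ ∈ idx N, (bD N u ℓ) ^ 2)
        - (N:ℝ)⁻¹ ^ 2 * ∑ ℓ ∈ idx N, (cD2 N u ℓ) ^ 2 := by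
    rw [Finset.sum_congr rfl (fun ℓ _ => hkey2 ℓ)]
    rw [Finset.sum_sub_distrib, Finset.sum_add_distrib, ← Finset.mul_sum, ← Finset.mul_sum,
      ← Finset.mul_sum, hshift]
    ring
  rw [hnl2a, hnl2c, Finset.sum_add_distrib, ← Finset.mul_sum, ← Finset.mul_sum, hSb]
  ring
end
end

section
/- The infimum of ‖ψ''‖_{ℓ²_ε} / ‖ψ'‖_{ℓ²_ε} over all ψ ∈ 𝒰 ∖ {0} equals μ_ε = 2 sin(πε/2)/ε, and the infimum is attained by the element ψ ∈ 𝒰 whose backward difference is ψ'_ℓ = sin(ε ℓ π). -/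
open Finset Real

noncomputable section

section base
variable {β : Type*} [AddCommMonoid β]

lemma sum_Icc_int (a : ℤ) (n : ℕ) (F : ℤ → β) :
    ∑ ℓ ∈ Finset.Icc a (a + n - 1), F ℓ = ∑ i ∈ Finset.range n, F (a + i) := by
  induction n with
  | zero => simp
  | succ m ih =>
    rw [Finset.sum_range_succ, ← ih]
    have h2 : Finset.Icc a (a + ((m:ℤ)+1) - 1) = insert (a + m) (Finset.Icc a (a + (m:ℤ) - 1)) := by
      ext x
      simp only [Finset.mem_Icc, Finset.mem_insert]
      omega
    push_cast
    rw [h2, Finset.sum_insert (by simp), add_comm]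

lemma sum_window_succ {M : ℤ} (g : ℤ → β) (hp : ∀ ℓ, g (ℓ + M) = g ℓ) (a : ℤ) (hM : 1 ≤ M) :
    ∑ ℓ ∈ Finset.Icc (a+1) (a + M), g ℓ = ∑ ℓ ∈ Finset.Icc a (a + M - 1), g ℓ := by
  have h1 : Finset.Icc (a+1) (a+M) = insert (a+M) (Finset.Icc (a+1) (a+M-1)) := by
    ext x; simp only [Finset.mem_Icc, Finset.mem_insert]; omega
  have h2 : Finset.Icc a (a+M-1) = insert a (Finset.Icc (a+1) (a+M-1)) := by
    ext x; simp only [Finset.mem_Icc, Finset.mem_insert]; omega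
  rw [h1, h2, Finset.sum_insert (by simp), Finset.sum_insert (by simp only [Finset.mem_Icc]; omega)]
  rw [hp a]

lemma periodZ {M : ℤ} (g : ℤ → β) (hp : ∀ ℓ, g (ℓ + M) = g ℓ) (ℓ : ℤ) :
    ∀ t : ℤ, g (ℓ + M * t) = g ℓ := by
  intro t
  induction t using Int.induction_on with
  | zero => simp
  | succ n ih => rw [show ℓ + M * ((n:ℤ)+1) = (ℓ + M * n) + M by ring, hp, ih]
  | pred n ih =>
      have := hp (ℓ + M * (-(n:ℤ)-1))
      rw [show ℓ + M * (-(n:ℤ)-1) + M = ℓ + M * (-(n:ℤ)) by ring] at this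
      rw [← this]
      exact ih

lemma exists_rep (N : ℕ) (hN : 1 ≤ N) (g : ℤ → β) (hp : ∀ ℓ, g (ℓ + 2*(N:ℤ)) = g ℓ) (ℓ : ℤ) :
    ∃ m ∈ idx N, g ℓ = g m := by
  set M : ℤ := 2 * N with hM
  have hM0 : 0 < M := by positivity
  set r := (ℓ + N - 1) % M with hr
  have h1 : 0 ≤ r := Int.emod_nonneg _ (by omega)
  have h2 : r < M := Int.emod_lt_of_pos _ hM0
  refine ⟨r - N + 1, ?_, ?_⟩
  · simp only [idx, Finset.mem_Icc]; omega
  · have hq : r + M * ((ℓ + N - 1) / M) = ℓ + N - 1 := by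
      have := Int.emod_add_mul_ediv (ℓ + N - 1) M
      rw [← hr] at this
      exact this
    have := periodZ g hp (r - N + 1) ((ℓ + N - 1) / M)
    rw [show r - N + 1 + M * ((ℓ + N - 1)/M) = ℓ by omega] at this
    exact this
end base

lemma geom_idx (N : ℕ) (hN : 1 ≤ N) (z : ℂ) (hz1 : z ≠ 1) (hzM : z ^ (2*N) = 1) :
    ∑ ℓ ∈ idx N, z ^ ℓ = 0 := by
  have hz0 : z ≠ 0 := by
    intro h
    rw [h, zero_pow (by omega : 2*N ≠ 0)] at hzM
    exact zero_ne_one hzM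
  have hidx : idx N = Finset.Icc (-(N:ℤ)+1) ((-(N:ℤ)+1) + (2*N : ℕ) - 1) := by
    simp only [idx]; congr 1; push_cast; ring
  rw [hidx, sum_Icc_int]
  have : ∀ i : ℕ, z ^ ((-(N:ℤ)+1) + (i:ℤ)) = z ^ (-(N:ℤ)+1) * z ^ i := by
    intro i
    rw [zpow_add₀ hz0, zpow_natCast]
  simp only [this]
  rw [← Finset.mul_sum, geom_sum_eq hz1, hzM]
  simp

lemma cos_sum_idx (N : ℕ) (hN : 1 ≤ N) (c d : ℝ)
    (h1 : Complex.exp (d * Complex.I) ≠ 1)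
    (hM : Complex.exp (d * Complex.I) ^ (2*N) = 1) :
    ∑ ℓ ∈ idx N, Real.cos (c + ℓ * d) = 0 := by
  have key : ∀ ℓ : ℤ, Real.cos (c + ℓ * d)
      = (Complex.exp ((c:ℂ) * Complex.I) * Complex.exp ((d:ℂ) * Complex.I) ^ ℓ).re := by
    intro ℓ
    rw [← Complex.exp_int_mul, ← Complex.exp_add,
      show (c:ℂ) * Complex.I + (ℓ:ℂ) * ((d:ℂ) * Complex.I)
        = ((c + ℓ * d : ℝ) : ℂ) * Complex.I by push_cast; ring]
    rw [Complex.exp_ofReal_mul_I_re]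
  simp only [key]
  rw [← Complex.re_sum, ← Finset.mul_sum, geom_idx N hN _ h1 hM, mul_zero, Complex.zero_re]

noncomputable def wc (N : ℕ) (m : ℤ) : ℂ :=
  Complex.exp (((2 * Real.pi * m / (2 * N : ℕ) : ℝ) : ℂ) * Complex.I)

lemma wc_add (N : ℕ) (m m' : ℤ) : wc N (m + m') = wc N m * wc N m' := by
  rw [wc, wc, wc, ← Complex.exp_add]
  congr 1
  push_cast
  ring

lemma wc_zero (N : ℕ) : wc N 0 = 1 := by
  simp [wc]

lemma wc_nat_mul (N : ℕ) (k : ℕ) (d : ℤ) : wc N (k * d) = wc N d ^ k := by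
  rw [wc, wc, ← Complex.exp_nat_mul]
  congr 1
  push_cast
  ring

lemma wc_M_mul (N : ℕ) (hN : 1 ≤ N) (t : ℤ) : wc N ((2*N : ℤ) * t) = 1 := by
  have hN' : ((N:ℂ)) ≠ 0 := by
    exact_mod_cast (by omega : N ≠ 0)
  rw [wc]
  refine Complex.exp_eq_one_iff.mpr ⟨t, ?_⟩
  push_cast
  field_simp

lemma conj_wc (N : ℕ) (m : ℤ) : (starRingEnd ℂ) (wc N m) = wc N (-m) := by
  rw [wc, wc, ← Complex.exp_conj]
  congr 1
  push_cast
  simp only [map_mul, map_div₀, Complex.conj_I, Complex.conj_ofReal, map_ofNat,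
    map_intCast, map_natCast]
  ring

lemma wc_ne_one (N : ℕ) (hN : 1 ≤ N) (m : ℤ) (h0 : 0 < m) (h1 : m < 2*N) : wc N m ≠ 1 := by
  intro h
  rw [wc, Complex.exp_eq_one_iff] at h
  obtain ⟨n, hn⟩ := h
  have hI : ((2 * Real.pi * m / (2 * N : ℕ) : ℝ) : ℂ) = (n : ℂ) * (2 * Real.pi) := by
    have h2 : ((2 * Real.pi * m / (2 * N : ℕ) : ℝ) : ℂ) * Complex.I
        = ((n : ℂ) * (2 * Real.pi)) * Complex.I := by rw [hn]; ring
    exact mul_right_cancel₀ Complex.I_ne_zero h2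
  have hR : (2 * Real.pi * m / (2 * N : ℕ) : ℝ) = n * (2 * Real.pi) := by
    exact_mod_cast hI
  have hM : (0:ℝ) < ((2*N : ℕ) : ℝ) := by positivity
  have hmn : (2*Real.pi) * (m : ℝ) = (2*Real.pi) * ((n:ℝ) * (2*(N:ℝ))) := by
    rw [div_eq_iff (ne_of_gt hM)] at hR
    push_cast at hR ⊢
    linarith [hR]
  have hmr : (m:ℝ) = (n:ℝ) * (2*(N:ℝ)) :=
    mul_left_cancel₀ (by positivity) hmn
  have hmz : m = n * (2*(N:ℤ)) := by exact_mod_cast hmr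
  have h1' : m < 2*(N:ℤ) := h1
  have h2N : (0:ℤ) < 2*(N:ℤ) := by positivity
  rcases le_or_gt n 0 with hn0 | hn0
  · have : n * (2*(N:ℤ)) ≤ 0 := mul_nonpos_of_nonpos_of_nonneg hn0 (by positivity)
    linarith
  · have hn1 : (1:ℤ) ≤ n := hn0
    have : 2*(N:ℤ) ≤ n * (2*(N:ℤ)) := le_mul_of_one_le_left (by positivity) hn1
    linarith

lemma orth (N : ℕ) (hN : 1 ≤ N) (m : ℤ) (h0 : m ≠ 0) (hlo : -(2*(N:ℤ)) < m) (hhi : m < 2*N) :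
    ∑ k ∈ Finset.range (2*N), wc N m ^ k = 0 := by
  have hpow : wc N m ^ (2*N) = 1 := by
    rw [← wc_nat_mul]
    have : ((2*N : ℕ) : ℤ) * m = (2*N : ℤ) * m := by push_cast; ring
    rw [this, wc_M_mul N hN]
  have hne : wc N m ≠ 1 := by
    rcases lt_or_gt_of_ne h0 with hneg | hpos
    · intro h
      have h2 : wc N (-m) ≠ 1 := wc_ne_one N hN (-m) (by omega) (by omega)
      apply h2
      have := wc_add N m (-m)
      rw [add_neg_cancel, wc_zero, h, one_mul] at this
      exact this.symm
    · exact wc_ne_one N hN m hpos hhi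
  rw [geom_sum_eq hne, hpow]
  simp

lemma parseval (N : ℕ) (hN : 1 ≤ N) (ξ : ℤ → ℝ) :
    ∑ k ∈ Finset.range (2*N),
      Complex.normSq (∑ ℓ ∈ idx N, wc N (-((k:ℤ)*ℓ)) * (ξ ℓ : ℂ))
      = 2*N * ∑ ℓ ∈ idx N, (ξ ℓ)^2 := by
  have key : ∑ k ∈ Finset.range (2*N),
      ((∑ ℓ ∈ idx N, wc N (-((k:ℤ)*ℓ)) * (ξ ℓ:ℂ)) *
       (starRingEnd ℂ) (∑ ℓ ∈ idx N, wc N (-((k:ℤ)*ℓ)) * (ξ ℓ:ℂ)))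
      = (2*N : ℂ) * ∑ ℓ ∈ idx N, (ξ ℓ:ℂ)^2 := by
    have hconj : ∀ k : ℕ, (starRingEnd ℂ) (∑ ℓ ∈ idx N, wc N (-((k:ℤ)*ℓ)) * (ξ ℓ:ℂ))
        = ∑ m ∈ idx N, wc N ((k:ℤ)*m) * (ξ m:ℂ) := by
      intro k
      rw [map_sum]
      refine Finset.sum_congr rfl fun m _ => ?_
      rw [map_mul, conj_wc, Complex.conj_ofReal, neg_neg]
    simp only [hconj, Finset.sum_mul_sum]
    rw [Finset.sum_comm]
    have hswap : ∀ ℓ : ℤ, ∑ k ∈ Finset.range (2*N), ∑ m ∈ idx N,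
          (wc N (-((k:ℤ)*ℓ)) * (ξ ℓ:ℂ)) * (wc N ((k:ℤ)*m) * (ξ m:ℂ))
        = ∑ m ∈ idx N, ∑ k ∈ Finset.range (2*N),
          (wc N (-((k:ℤ)*ℓ)) * (ξ ℓ:ℂ)) * (wc N ((k:ℤ)*m) * (ξ m:ℂ)) :=
      fun ℓ => Finset.sum_comm
    simp only [hswap]
    have hinner : ∀ ℓ ∈ idx N, ∀ m ∈ idx N,
        ∑ k ∈ Finset.range (2*N),
          (wc N (-((k:ℤ)*ℓ)) * (ξ ℓ:ℂ)) * (wc N ((k:ℤ)*m) * (ξ m:ℂ))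
        = if m = ℓ then (2*N:ℂ) * ((ξ ℓ:ℂ) * (ξ m:ℂ)) else 0 := by
      intro ℓ hℓ m hm
      have hterm : ∀ k : ℕ,
          (wc N (-((k:ℤ)*ℓ)) * (ξ ℓ:ℂ)) * (wc N ((k:ℤ)*m) * (ξ m:ℂ))
          = wc N (m - ℓ) ^ k * ((ξ ℓ:ℂ) * (ξ m:ℂ)) := by
        intro k
        have hre : wc N (-((k:ℤ)*ℓ)) * (ξ ℓ:ℂ) * (wc N ((k:ℤ)*m) * (ξ m:ℂ))
            = (wc N (-((k:ℤ)*ℓ)) * wc N ((k:ℤ)*m)) * ((ξ ℓ:ℂ) * (ξ m:ℂ)) := by ring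
        rw [hre, ← wc_add, show -((k:ℤ)*ℓ) + (k:ℤ)*m = (k:ℤ)*(m-ℓ) by ring, wc_nat_mul]
      simp only [hterm, ← Finset.sum_mul]
      by_cases h : m = ℓ
      · subst h
        simp [wc_zero, sub_self]
      · rw [if_neg h]
        simp only [idx, Finset.mem_Icc] at hℓ hm
        rw [orth N hN (m - ℓ) (by omega) (by omega) (by omega)]
        simp
    rw [Finset.sum_congr rfl (fun ℓ hℓ => Finset.sum_congr rfl (fun m hm => hinner ℓ hℓ m hm))]
    rw [Finset.mul_sum]
    refine Finset.sum_congr rfl fun ℓ hℓ => ?_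
    rw [Finset.sum_ite_eq' (idx N) ℓ]
    simp only [if_pos hℓ]
    ring
  have final : ((∑ k ∈ Finset.range (2*N),
      Complex.normSq (∑ ℓ ∈ idx N, wc N (-((k:ℤ)*ℓ)) * (ξ ℓ : ℂ)) : ℝ) : ℂ)
      = (((2*N : ℝ) * ∑ ℓ ∈ idx N, (ξ ℓ)^2 : ℝ) : ℂ) := by
    rw [Complex.ofReal_sum]
    simp only [Complex.mul_conj] at key
    rw [key]
    push_cast
    ring
  exact_mod_cast final

lemma dft_diff (N : ℕ) (hN : 1 ≤ N) (φ : ℤ → ℝ)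
    (hper : ∀ ℓ, φ (ℓ + 2*(N:ℤ)) = φ ℓ) (k : ℕ) :
    ∑ ℓ ∈ idx N, wc N (-((k:ℤ)*ℓ)) * ((φ (ℓ+1) - φ ℓ : ℝ) : ℂ)
    = (wc N k - 1) * ∑ ℓ ∈ idx N, wc N (-((k:ℤ)*ℓ)) * (φ ℓ : ℂ) := by
  set G : ℤ → ℂ := fun ℓ => wc N (-((k:ℤ)*(ℓ-1))) * (φ ℓ : ℂ) with hG
  have hGper : ∀ ℓ, G (ℓ + 2*(N:ℤ)) = G ℓ := by
    intro ℓ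
    simp only [hG]
    rw [hper]
    congr 1
    rw [show -((k:ℤ)*(ℓ + 2*(N:ℤ) - 1)) = -((k:ℤ)*(ℓ-1)) + (2*(N:ℤ)) * (-(k:ℤ)) by ring,
      wc_add, wc_M_mul N hN, mul_one]
  have hshift : ∑ ℓ ∈ idx N, wc N (-((k:ℤ)*ℓ)) * ((φ (ℓ+1) : ℝ) : ℂ)
      = ∑ ℓ ∈ idx N, G (ℓ + 1) := by
    refine Finset.sum_congr rfl fun ℓ _ => ?_
    simp only [hG, add_sub_cancel_right]
  have hwin : ∑ ℓ ∈ idx N, G (ℓ + 1) = ∑ ℓ ∈ idx N, G ℓ := by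
    have hmap : ∑ ℓ ∈ Finset.Icc ((-(N:ℤ)+1) + 1) ((-(N:ℤ)+1) + 2*(N:ℤ)), G ℓ
        = ∑ ℓ ∈ idx N, G (ℓ + 1) := by
      rw [show Finset.Icc ((-(N:ℤ)+1) + 1) ((-(N:ℤ)+1) + 2*(N:ℤ))
          = Finset.map (addRightEmbedding 1) (idx N) by
        simp only [idx]
        rw [Finset.map_add_right_Icc]
        congr 1 <;> ring]
      rw [Finset.sum_map]
      rfl
    rw [← hmap, sum_window_succ G hGper (-(N:ℤ)+1) (by omega)]
    congr 1
    simp only [idx]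
    congr 1
    ring
  have hGval : ∀ ℓ : ℤ, G ℓ = wc N k * (wc N (-((k:ℤ)*ℓ)) * (φ ℓ : ℂ)) := by
    intro ℓ
    simp only [hG]
    rw [show -((k:ℤ)*(ℓ-1)) = (k:ℤ) + -((k:ℤ)*ℓ) by ring, wc_add]
    ring
  have split : ∀ ℓ : ℤ, wc N (-((k:ℤ)*ℓ)) * ((φ (ℓ+1) - φ ℓ : ℝ) : ℂ)
      = wc N (-((k:ℤ)*ℓ)) * ((φ (ℓ+1) : ℝ) : ℂ) - wc N (-((k:ℤ)*ℓ)) * ((φ ℓ : ℝ) : ℂ) := by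
    intro ℓ; push_cast; ring
  simp only [split]
  rw [Finset.sum_sub_distrib, hshift, hwin]
  simp only [hGval]
  rw [← Finset.mul_sum]
  ring

lemma nsq_exp (θ : ℝ) :
    Complex.normSq (Complex.exp ((θ:ℂ) * Complex.I) - 1) = 2 - 2*Real.cos θ := by
  rw [Complex.normSq_apply]
  simp only [Complex.sub_re, Complex.sub_im, Complex.exp_ofReal_mul_I_re,
    Complex.exp_ofReal_mul_I_im, Complex.one_re, Complex.one_im]
  nlinarith [Real.sin_sq_add_cos_sq θ]

lemma normSq_wc_sub_one (N : ℕ) (hN : 1 ≤ N) (k : ℕ) (hk1 : 1 ≤ k) (hk2 : k < 2*N) :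
    4 * Real.sin (Real.pi/(2*N))^2 ≤ Complex.normSq (wc N (k:ℤ) - 1) := by
  have hMpos : (0:ℝ) < 2*(N:ℝ) := by positivity
  have hval : Complex.normSq (wc N (k:ℤ) - 1)
      = 2 - 2*Real.cos (2*Real.pi*k/(2*(N:ℝ))) := by
    rw [wc, nsq_exp]
    norm_num
  rw [hval]
  have hkey : Real.cos (2*Real.pi*k/(2*(N:ℝ))) ≤ Real.cos (2*Real.pi/(2*(N:ℝ))) := by
    have hx0 : 0 ≤ 2*Real.pi/(2*(N:ℝ)) := by positivity
    have hk1' : (1:ℝ) ≤ (k:ℝ) := by exact_mod_cast hk1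
    have hpi := Real.pi_pos
    rcases le_or_gt (k : ℝ) (N : ℝ) with hcase | hcase
    · apply Real.cos_le_cos_of_nonneg_of_le_pi hx0
      · rw [div_le_iff₀ hMpos]
        nlinarith
      · rw [div_le_div_iff₀ hMpos hMpos]
        nlinarith [mul_pos Real.pi_pos hMpos]
    · have hflip : Real.cos (2*Real.pi*k/(2*(N:ℝ)))
          = Real.cos (2*Real.pi - 2*Real.pi*k/(2*(N:ℝ))) := (Real.cos_two_pi_sub _).symm
      rw [hflip]
      have hk2' : (k:ℝ) ≤ 2*(N:ℝ) - 1 := by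
        have h' : (k:ℝ) + 1 ≤ 2*(N:ℝ) := by exact_mod_cast hk2
        linarith
      have hkN : (N:ℝ) + 1 ≤ (k:ℝ) := by
        have : N < k := by exact_mod_cast hcase
        exact_mod_cast this
      apply Real.cos_le_cos_of_nonneg_of_le_pi hx0
      · have h' : Real.pi ≤ 2*Real.pi*k/(2*(N:ℝ)) := by
          rw [le_div_iff₀ hMpos]
          nlinarith
        linarith
      · have h' : 2*Real.pi*k/(2*(N:ℝ)) + 2*Real.pi/(2*(N:ℝ)) ≤ 2*Real.pi := by
          rw [← add_div, div_le_iff₀ hMpos]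
          nlinarith
        linarith
  have heq : 2 - 2*Real.cos (2*Real.pi/(2*(N:ℝ))) = 4 * Real.sin (Real.pi/(2*N))^2 := by
    have h2x : 2*Real.pi/(2*(N:ℝ)) = 2 * (Real.pi/(2*(N:ℝ))) := by ring
    rw [h2x, Real.cos_two_mul]
    nlinarith [Real.sin_sq_add_cos_sq (Real.pi/(2*(N:ℝ)))]
  push_cast
  linarith [hkey, heq.symm.le]

lemma fourier_lb (N : ℕ) (hN : 1 ≤ N) (φ : ℤ → ℝ)
    (hper : ∀ ℓ, φ (ℓ + 2*(N:ℤ)) = φ ℓ) (hmean : ∑ ℓ ∈ idx N, φ ℓ = 0) :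
    4 * Real.sin (Real.pi/(2*N))^2 * ∑ ℓ ∈ idx N, (φ ℓ)^2
      ≤ ∑ ℓ ∈ idx N, (φ (ℓ+1) - φ ℓ)^2 := by
  have hP1 := parseval N hN φ
  have hP2 := parseval N hN (fun ℓ => φ (ℓ+1) - φ ℓ)
  have hc0 : (∑ ℓ ∈ idx N, wc N (-(((0:ℕ):ℤ)*ℓ)) * (φ ℓ : ℂ)) = 0 := by
    have : ∀ ℓ : ℤ, wc N (-(((0:ℕ):ℤ)*ℓ)) * (φ ℓ : ℂ) = (φ ℓ : ℂ) := by
      intro ℓ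
      norm_num [wc_zero]
    simp only [this]
    rw [← Complex.ofReal_sum, hmean, Complex.ofReal_zero]
  have hterm : ∀ k ∈ Finset.range (2*N),
      4 * Real.sin (Real.pi/(2*N))^2
        * Complex.normSq (∑ ℓ ∈ idx N, wc N (-((k:ℤ)*ℓ)) * (φ ℓ : ℂ))
      ≤ Complex.normSq (∑ ℓ ∈ idx N, wc N (-((k:ℤ)*ℓ)) * ((φ (ℓ+1) - φ ℓ : ℝ) : ℂ)) := by
    intro k hk
    rw [dft_diff N hN φ hper k, Complex.normSq_mul]
    rcases Nat.eq_zero_or_pos k with h0 | hpos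
    · subst h0
      rw [hc0]
      simp
    · have hb := normSq_wc_sub_one N hN k hpos (Finset.mem_range.mp hk)
      have hnn : 0 ≤ Complex.normSq (∑ ℓ ∈ idx N, wc N (-((k:ℤ)*ℓ)) * (φ ℓ : ℂ)) :=
        Complex.normSq_nonneg _
      nlinarith
  have hsum := Finset.sum_le_sum hterm
  rw [hP2] at hsum
  rw [← Finset.mul_sum, hP1] at hsum
  have hM : (0:ℝ) < 2*(N:ℝ) := by positivity
  have := hsum
  push_cast at this ⊢
  nlinarith [this]

lemma muEps_eq (N : ℕ) (hN : 1 ≤ N) :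
    muEps N = 2*(N:ℝ)*Real.sin (Real.pi/(2*(N:ℝ))) := by
  have hN0 : (N:ℝ) ≠ 0 := Nat.cast_ne_zero.mpr (by omega)
  rw [muEps, show Real.pi * (N:ℝ)⁻¹ / 2 = Real.pi / (2*(N:ℝ)) by
    rw [← div_eq_mul_inv, div_div, mul_comm]]
  rw [div_eq_mul_inv, inv_inv]
  ring

lemma card_idx (N : ℕ) : (idx N).card = 2*N := by
  simp only [idx, Int.card_Icc]
  omega

lemma telescope (u : ℤ → ℝ) (a : ℤ) (n : ℕ) :
    ∑ ℓ ∈ Finset.Icc a (a + n - 1), (u ℓ - u (ℓ-1)) = u (a + n - 1) - u (a - 1) := by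
  rw [sum_Icc_int]
  calc ∑ i ∈ Finset.range n, (u (a + i) - u (a + i - 1))
      = ∑ i ∈ Finset.range n, (u (a + ((i:ℕ)+1:ℕ) - 1) - u (a + i - 1)) :=
        Finset.sum_congr rfl (fun i _ => by
          rw [show (a + (((i:ℕ)+1:ℕ)) - 1 : ℤ) = a + i by push_cast; ring])
    _ = u (a + (n:ℤ) - 1) - u (a + ((0:ℕ):ℤ) - 1) :=
        Finset.sum_range_sub (fun i : ℕ => u (a + i - 1)) n
    _ = u (a + n - 1) - u (a - 1) := by norm_num

lemma expI_ne_one {d : ℝ} (h0 : 0 < d) (hpi : d ≤ Real.pi) :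
    Complex.exp ((d:ℝ) * Complex.I) ≠ 1 := by
  intro h
  have hre := congrArg Complex.re h
  rw [Complex.exp_ofReal_mul_I_re, Complex.one_re] at hre
  have hlt : Real.cos d < Real.cos 0 :=
    Real.cos_lt_cos_of_nonneg_of_le_pi le_rfl hpi h0
  rw [Real.cos_zero, hre] at hlt
  exact lt_irrefl _ hlt

lemma expI_pow (d : ℝ) (n : ℕ) :
    Complex.exp ((d:ℝ) * Complex.I) ^ n = Complex.exp (((n*d : ℝ) : ℂ) * Complex.I) := by
  rw [← Complex.exp_nat_mul]
  congr 1
  push_cast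
  ring

lemma ratio_eq' (N : ℕ) (hN : 2 ≤ N) (ψ : ℤ → ℝ)
    (hbd : ∀ ℓ : ℤ, bD N ψ ℓ = Real.sin ((N:ℝ)⁻¹ * (ℓ:ℝ) * Real.pi)) :
    nl2 N (cD2 N ψ) / nl2 N (bD N ψ) = muEps N := by
  have hN1 : 1 ≤ N := by omega
  have hN0 : (N:ℝ) ≠ 0 := Nat.cast_ne_zero.mpr (by omega)
  have hNpos : (0:ℝ) < N := by positivity
  have hNC : (N:ℂ) ≠ 0 := Nat.cast_ne_zero.mpr (by omega)
  have hpi := Real.pi_pos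
  have hs_pos : 0 < Real.sin (Real.pi/(2*(N:ℝ))) := by
    apply Real.sin_pos_of_pos_of_lt_pi
    · positivity
    · rw [div_lt_iff₀ (by positivity)]
      have h1N : (1:ℝ) ≤ (N:ℝ) := by exact_mod_cast hN1
      nlinarith
  have hz1 : Complex.exp (((2*Real.pi/(N:ℝ)) : ℝ) * Complex.I) ≠ 1 := by
    apply expI_ne_one (by positivity)
    rw [div_le_iff₀ hNpos]
    have h2N : (2:ℝ) ≤ (N:ℝ) := by exact_mod_cast hN
    nlinarith [mul_le_mul_of_nonneg_left h2N (le_of_lt hpi)]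
  have hzM : Complex.exp (((2*Real.pi/(N:ℝ)) : ℝ) * Complex.I) ^ (2*N) = 1 := by
    rw [expI_pow]
    refine Complex.exp_eq_one_iff.mpr ⟨2, ?_⟩
    push_cast
    field_simp
  have hsum1 : ∑ ℓ ∈ idx N, (bD N ψ ℓ)^2 = (N:ℝ) := by
    have hterm : ∀ ℓ ∈ idx N, (bD N ψ ℓ)^2
        = 1/2 - Real.cos (0 + (ℓ:ℝ)*(2*Real.pi/(N:ℝ)))/2 := by
      intro ℓ _
      rw [hbd]
      have hss : Real.sin ((N:ℝ)⁻¹ * (ℓ:ℝ) * Real.pi)^2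
          = 1 - Real.cos ((N:ℝ)⁻¹ * (ℓ:ℝ) * Real.pi)^2 := Real.sin_sq _
      have hcc := Real.cos_sq ((N:ℝ)⁻¹ * (ℓ:ℝ) * Real.pi)
      rw [show (2:ℝ) * ((N:ℝ)⁻¹ * (ℓ:ℝ) * Real.pi) = 0 + (ℓ:ℝ)*(2*Real.pi/(N:ℝ)) by
        field_simp; ring] at hcc
      rw [hss]
      rw [show Real.cos ((N:ℝ)⁻¹ * (ℓ:ℝ) * Real.pi)^2
          = 1/2 + Real.cos (0 + (ℓ:ℝ)*(2*Real.pi/(N:ℝ)))/2 from hcc]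
      ring
    rw [Finset.sum_congr rfl hterm, Finset.sum_sub_distrib, Finset.sum_const, card_idx,
      ← Finset.sum_div, cos_sum_idx N hN1 0 (2*Real.pi/(N:ℝ)) hz1 hzM]
    push_cast
    ring
  have hc2 : ∀ ℓ : ℤ, cD2 N ψ ℓ = (N:ℝ) * (bD N ψ (ℓ+1) - bD N ψ ℓ) := by
    intro ℓ
    simp only [cD2, bD, add_sub_cancel_right]
    ring
  have hsum2 : ∑ ℓ ∈ idx N, (cD2 N ψ ℓ)^2
      = 4*(N:ℝ)^3*Real.sin (Real.pi/(2*(N:ℝ)))^2 := by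
    have hterm : ∀ ℓ ∈ idx N, (cD2 N ψ ℓ)^2
        = 4*(N:ℝ)^2*Real.sin (Real.pi/(2*(N:ℝ)))^2
          * (1/2 + Real.cos (Real.pi/(N:ℝ) + (ℓ:ℝ)*(2*Real.pi/(N:ℝ)))/2) := by
      intro ℓ _
      rw [hc2, hbd, hbd, Real.sin_sub_sin]
      have h1 : ((N:ℝ)⁻¹ * ((ℓ+1:ℤ):ℝ) * Real.pi - (N:ℝ)⁻¹ * (ℓ:ℝ) * Real.pi)/2
          = Real.pi/(2*(N:ℝ)) := by push_cast; field_simp; ring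
      set z := ((N:ℝ)⁻¹ * ((ℓ+1:ℤ):ℝ) * Real.pi + (N:ℝ)⁻¹ * (ℓ:ℝ) * Real.pi)/2 with hz
      have hcsq := Real.cos_sq z
      rw [show 2*z = Real.pi/(N:ℝ) + (ℓ:ℝ)*(2*Real.pi/(N:ℝ)) by
        rw [hz]; push_cast; field_simp; ring] at hcsq
      rw [h1]
      linear_combination (4*(N:ℝ)^2*Real.sin (Real.pi/(2*(N:ℝ)))^2) * hcsq
    rw [Finset.sum_congr rfl hterm, ← Finset.mul_sum, Finset.sum_add_distrib,
      Finset.sum_const, card_idx, ← Finset.sum_div,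
      cos_sum_idx N hN1 (Real.pi/(N:ℝ)) (2*Real.pi/(N:ℝ)) hz1 hzM]
    push_cast
    ring
  have hb : nl2 N (bD N ψ) = 1 := by
    rw [nl2, hsum1, inv_mul_cancel₀ hN0, Real.sqrt_one]
  have hc : nl2 N (cD2 N ψ) = 2*(N:ℝ)*Real.sin (Real.pi/(2*(N:ℝ))) := by
    rw [nl2, hsum2,
      show (N:ℝ)⁻¹*(4*(N:ℝ)^3*Real.sin (Real.pi/(2*(N:ℝ)))^2)
        = (2*(N:ℝ)*Real.sin (Real.pi/(2*(N:ℝ))))^2 by field_simp; ring,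
      Real.sqrt_sq (by positivity)]
  rw [hb, hc, div_one, muEps_eq N hN1]

lemma ratio_lb' (N : ℕ) (hN : 2 ≤ N) (ψ : ℤ → ℝ) (hmem : ψ ∈ uSet N) (hne : ψ ≠ 0) :
    muEps N ≤ nl2 N (cD2 N ψ) / nl2 N (bD N ψ) := by
  obtain ⟨hper, hmean⟩ := hmem
  have hN1 : 1 ≤ N := by omega
  have hN0 : (N:ℝ) ≠ 0 := Nat.cast_ne_zero.mpr (by omega)
  have hNpos : (0:ℝ) < N := by positivity
  have hpi := Real.pi_pos
  have hs_pos : 0 < Real.sin (Real.pi/(2*(N:ℝ))) := by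
    apply Real.sin_pos_of_pos_of_lt_pi
    · positivity
    · rw [div_lt_iff₀ (by positivity)]
      have h1N : (1:ℝ) ≤ (N:ℝ) := by exact_mod_cast hN1
      nlinarith
  set φ : ℤ → ℝ := bD N ψ with hφ
  have hφper : ∀ ℓ, φ (ℓ + 2*(N:ℤ)) = φ ℓ := by
    intro ℓ
    simp only [hφ, bD]
    rw [show ℓ + 2*(N:ℤ) - 1 = (ℓ-1) + 2*(N:ℤ) by ring, hper, hper]
  have hφmean : ∑ ℓ ∈ idx N, φ ℓ = 0 := by
    have hidxeq : idx N = Finset.Icc (-(N:ℤ)+1) ((-(N:ℤ)+1) + (2*N : ℕ) - 1) := by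
      simp only [idx]; congr 1; push_cast; ring
    have htel := telescope ψ (-(N:ℤ)+1) (2*N)
    have hNN : ψ ((-(N:ℤ)+1) + (2*N:ℕ) - 1) = ψ ((-(N:ℤ)+1) - 1) := by
      rw [show ((-(N:ℤ)+1) + (2*N:ℕ) - 1 : ℤ) = (-(N:ℤ)) + 2*(N:ℤ) by push_cast; ring,
        hper, show ((-(N:ℤ)+1) - 1 : ℤ) = -(N:ℤ) by ring]
    rw [hNN, sub_self] at htel
    calc ∑ ℓ ∈ idx N, φ ℓ = (N:ℝ) * ∑ ℓ ∈ idx N, (ψ ℓ - ψ (ℓ-1)) := by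
          rw [Finset.mul_sum]
          exact Finset.sum_congr rfl fun i _ => rfl
      _ = 0 := by rw [hidxeq, htel, mul_zero]
  have hφsq_pos : 0 < ∑ ℓ ∈ idx N, (φ ℓ)^2 := by
    rcases (Finset.sum_nonneg fun ℓ _ => sq_nonneg (φ ℓ)).lt_or_eq with h | h
    · exact h
    exfalso
    have hzero : ∀ ℓ ∈ idx N, φ ℓ = 0 := by
      intro ℓ hℓ
      have := (Finset.sum_eq_zero_iff_of_nonneg (fun ℓ _ => sq_nonneg (φ ℓ))).mp h.symm ℓ hℓ
      exact pow_eq_zero_iff (n := 2) (by norm_num) |>.mp this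
    have hall : ∀ ℓ : ℤ, φ ℓ = 0 := by
      intro ℓ
      obtain ⟨m, hm, heq⟩ := exists_rep N hN1 φ hφper ℓ
      rw [heq]; exact hzero m hm
    have hstep : ∀ ℓ : ℤ, ψ ℓ = ψ (ℓ - 1) := by
      intro ℓ
      have := hall ℓ
      simp only [hφ, bD] at this
      have h2 : ψ ℓ - ψ (ℓ-1) = 0 := by
        by_contra hcon
        exact hcon (by nlinarith [this])
      linarith
    have hconst : ∀ ℓ : ℤ, ψ ℓ = ψ 0 := by
      intro ℓ
      induction ℓ using Int.induction_on with
      | zero => rfl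
      | succ i ih =>
          have := hstep ((i:ℤ)+1)
          rw [add_sub_cancel_right] at this
          rw [this, ih]
      | pred i ih =>
          have := hstep (-(i:ℤ))
          rw [show -(i:ℤ) - 1 = -(i:ℤ)-1 by ring] at this
          rw [show -(i:ℤ)-1 = -(i:ℤ)-1 from rfl, ← this, ih]
    have hψ0 : ψ 0 = 0 := by
      have hsum : ∑ ℓ ∈ idx N, ψ ℓ = (2*N : ℝ) * ψ 0 := by
        rw [Finset.sum_congr rfl (fun ℓ _ => hconst ℓ), Finset.sum_const, card_idx]
        push_cast
        ring
      rw [hmean] at hsum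
      have h2N : (0:ℝ) < 2*(N:ℝ) := by positivity
      nlinarith [hsum]
    apply hne
    funext ℓ
    rw [hconst ℓ, hψ0]
    rfl
  have hc2 : ∀ ℓ : ℤ, cD2 N ψ ℓ = (N:ℝ) * (φ (ℓ+1) - φ ℓ) := by
    intro ℓ
    simp only [hφ, cD2, bD, add_sub_cancel_right]
    ring
  have hfl := fourier_lb N hN1 φ hφper hφmean
  have hS2 : ∑ ℓ ∈ idx N, (cD2 N ψ ℓ)^2 = (N:ℝ)^2 * ∑ ℓ ∈ idx N, (φ (ℓ+1) - φ ℓ)^2 := by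
    rw [Finset.mul_sum]
    exact Finset.sum_congr rfl fun ℓ _ => by rw [hc2]; ring
  set s := Real.sin (Real.pi/(2*(N:ℝ))) with hs
  set B := ∑ ℓ ∈ idx N, (φ ℓ)^2 with hB
  have hnlb_pos : 0 < nl2 N (bD N ψ) := by
    rw [nl2]
    apply Real.sqrt_pos.mpr
    positivity
  have hnlb : nl2 N (bD N ψ) = Real.sqrt ((N:ℝ)⁻¹ * B) := rfl
  have hkey : muEps N * nl2 N (bD N ψ) ≤ nl2 N (cD2 N ψ) := by
    rw [muEps_eq N hN1, hnlb, nl2]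
    have h2Ns : (0:ℝ) ≤ 2*(N:ℝ)*s :=
      mul_nonneg (mul_nonneg (by norm_num) hNpos.le) hs_pos.le
    have h1 : 2*(N:ℝ)*s * Real.sqrt ((N:ℝ)⁻¹ * B)
        = Real.sqrt ((2*(N:ℝ)*s)^2 * ((N:ℝ)⁻¹ * B)) := by
      rw [Real.sqrt_mul (sq_nonneg _), Real.sqrt_sq h2Ns]
    rw [h1]
    apply Real.sqrt_le_sqrt
    have hfl' : 4 * s^2 * B ≤ ∑ ℓ ∈ idx N, (φ (ℓ+1) - φ ℓ)^2 := hfl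
    rw [hS2]
    have hN2 : (0:ℝ) < (N:ℝ)^2 := by positivity
    calc (2*(N:ℝ)*s)^2 * ((N:ℝ)⁻¹ * B) = (N:ℝ)⁻¹ * ((N:ℝ)^2 * (4*s^2*B)) := by
          field_simp; ring
      _ ≤ (N:ℝ)⁻¹ * ((N:ℝ)^2 * ∑ ℓ ∈ idx N, (φ (ℓ+1) - φ ℓ)^2) := by
          apply mul_le_mul_of_nonneg_left _ (by positivity)
          exact mul_le_mul_of_nonneg_left hfl' (le_of_lt hN2)
  rw [le_div_iff₀ hnlb_pos]
  exact hkey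
theorem stmt2 (N : ℕ) (hN : 2 ≤ N) :
    IsLeast {r : ℝ | ∃ ψ : ℤ → ℝ, ψ ∈ uSet N ∧ ψ ≠ 0 ∧
        r = nl2 N (cD2 N ψ) / nl2 N (bD N ψ)} (muEps N)
    ∧ ∀ ψ : ℤ → ℝ, ψ ∈ uSet N →
        (∀ ℓ : ℤ, bD N ψ ℓ = Real.sin ((N : ℝ)⁻¹ * (ℓ : ℝ) * Real.pi)) →
        nl2 N (cD2 N ψ) / nl2 N (bD N ψ) = muEps N := by
  have hN1 : 1 ≤ N := by omega
  have hN0 : (N:ℝ) ≠ 0 := Nat.cast_ne_zero.mpr (by omega)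
  have hNpos : (0:ℝ) < N := by positivity
  have hpi := Real.pi_pos
  have hs_pos : 0 < Real.sin (Real.pi/(2*(N:ℝ))) := by
    apply Real.sin_pos_of_pos_of_lt_pi
    · positivity
    · rw [div_lt_iff₀ (by positivity)]
      have h1N : (1:ℝ) ≤ (N:ℝ) := by exact_mod_cast hN1
      nlinarith
  have hDpos : (0:ℝ) < 2*(N:ℝ)*Real.sin (Real.pi/(2*(N:ℝ))) := by
    apply mul_pos (by positivity) hs_pos
  set ψ₀ : ℤ → ℝ := fun ℓ =>
    -Real.cos ((2*(ℓ:ℝ)+1)*Real.pi/(2*(N:ℝ))) / (2*(N:ℝ)*Real.sin (Real.pi/(2*(N:ℝ))))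
    with hψ₀
  have hbd0 : ∀ ℓ : ℤ, bD N ψ₀ ℓ = Real.sin ((N:ℝ)⁻¹ * (ℓ:ℝ) * Real.pi) := by
    intro ℓ
    have hyx : ψ₀ ℓ - ψ₀ (ℓ-1)
        = (Real.cos ((2*(((ℓ-1:ℤ)):ℝ)+1)*Real.pi/(2*(N:ℝ)))
           - Real.cos ((2*(ℓ:ℝ)+1)*Real.pi/(2*(N:ℝ))))
          / (2*(N:ℝ)*Real.sin (Real.pi/(2*(N:ℝ)))) := by
      simp only [hψ₀]
      push_cast
      ring
    have h1 : ((2*(((ℓ-1:ℤ)):ℝ)+1)*Real.pi/(2*(N:ℝ))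
        + (2*(ℓ:ℝ)+1)*Real.pi/(2*(N:ℝ)))/2 = (N:ℝ)⁻¹ * (ℓ:ℝ) * Real.pi := by
      push_cast
      field_simp
      ring
    have h2 : ((2*(((ℓ-1:ℤ)):ℝ)+1)*Real.pi/(2*(N:ℝ))
        - (2*(ℓ:ℝ)+1)*Real.pi/(2*(N:ℝ)))/2 = -(Real.pi/(2*(N:ℝ))) := by
      push_cast
      field_simp
      ring
    rw [bD, hyx, Real.cos_sub_cos, h1, h2, Real.sin_neg]
    field_simp
    exact mul_inv_cancel_right₀ (by rw [mul_comm]; exact hs_pos.ne') _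
  have hmem0 : ψ₀ ∈ uSet N := by
    constructor
    · intro ℓ
      simp only [hψ₀]
      have harg : (2*(((ℓ + 2*(N:ℤ)):ℤ):ℝ)+1)*Real.pi/(2*(N:ℝ))
          = (2*(ℓ:ℝ)+1)*Real.pi/(2*(N:ℝ)) + 2*Real.pi := by
        push_cast
        field_simp
        ring
      rw [harg, Real.cos_add_two_pi]
    · have hz1' : Complex.exp (((Real.pi/(N:ℝ)) : ℝ) * Complex.I) ≠ 1 := by
        apply expI_ne_one (by positivity)
        rw [div_le_iff₀ hNpos]
        have h1N : (1:ℝ) ≤ (N:ℝ) := by exact_mod_cast hN1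
        nlinarith
      have hNC : (N:ℂ) ≠ 0 := Nat.cast_ne_zero.mpr (by omega)
      have hzM' : Complex.exp (((Real.pi/(N:ℝ)) : ℝ) * Complex.I) ^ (2*N) = 1 := by
        rw [expI_pow]
        refine Complex.exp_eq_one_iff.mpr ⟨1, ?_⟩
        push_cast
        field_simp
      have hterm : ∀ ℓ ∈ idx N, ψ₀ ℓ
          = -(Real.cos (Real.pi/(2*(N:ℝ)) + (ℓ:ℝ)*(Real.pi/(N:ℝ)))
              / (2*(N:ℝ)*Real.sin (Real.pi/(2*(N:ℝ))))) := by
        intro ℓ _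
        simp only [hψ₀]
        rw [show (2*(ℓ:ℝ)+1)*Real.pi/(2*(N:ℝ))
            = Real.pi/(2*(N:ℝ)) + (ℓ:ℝ)*(Real.pi/(N:ℝ)) by field_simp; ring]
        ring
      rw [Finset.sum_congr rfl hterm, Finset.sum_neg_distrib, ← Finset.sum_div,
        cos_sum_idx N hN1 (Real.pi/(2*(N:ℝ))) (Real.pi/(N:ℝ)) hz1' hzM',
        zero_div, neg_zero]
  have hne0 : ψ₀ ≠ 0 := by
    intro h
    have h0 := congrFun h 0
    simp only [hψ₀, Pi.zero_apply] at h0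
    have hcospos : 0 < Real.cos ((2*((0:ℤ):ℝ)+1)*Real.pi/(2*(N:ℝ))) := by
      apply Real.cos_pos_of_mem_Ioo
      constructor
      · push_cast
        have : (0:ℝ) < Real.pi/(2*(N:ℝ)) := by positivity
        have h1 : (2*(0:ℝ)+1)*Real.pi/(2*(N:ℝ)) = Real.pi/(2*(N:ℝ)) := by ring
        nlinarith
      · push_cast
        have h1 : (2*(0:ℝ)+1)*Real.pi/(2*(N:ℝ)) = Real.pi/(2*(N:ℝ)) := by ring
        rw [h1, div_lt_div_iff₀ (by positivity) (by norm_num)]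
        have h2N : (2:ℝ) ≤ (N:ℝ) := by exact_mod_cast hN
        nlinarith
    have hlt : -Real.cos ((2*((0:ℤ):ℝ)+1)*Real.pi/(2*(N:ℝ)))
        / (2*(N:ℝ)*Real.sin (Real.pi/(2*(N:ℝ)))) < 0 :=
      div_neg_of_neg_of_pos (by linarith) hDpos
    rw [h0] at hlt
    exact lt_irrefl 0 hlt
  refine ⟨⟨⟨ψ₀, hmem0, hne0, (ratio_eq' N hN ψ₀ hbd0).symm⟩, ?_⟩,
    fun ψ hmem hbd => ratio_eq' N hN ψ hbd⟩
  rintro r ⟨ψ, hmem, hne, rfl⟩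
  exact ratio_lb' N hN ψ hmem hne
end
end

section
/- Let φ ∈ C²((0,∞); ℝ) and F > 0 with φ''(2F) ≤ 0. Then E_a''(y_F)[u,u] > 0 for all u ∈ 𝒰 ∖ {0} if and only if A_F − ε² μ_ε² φ''(2F) > 0, where μ_ε = 2 sin(πε/2)/ε. -/
open Finset Real

noncomputable section

namespace StmtAux

open Finset Real

/-! ### Exponential sums -/

def ec (M : ℕ) (d : ℤ) : ℂ := Complex.exp (2 * Real.pi * Complex.I * d / M)

lemma ec_add (M : ℕ) (hM : 0 < M) (d e : ℤ) : ec M (d + e) = ec M d * ec M e := by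
  unfold ec
  rw [← Complex.exp_add]
  congr 1
  have : (M:ℂ) ≠ 0 := by exact_mod_cast Nat.cast_ne_zero.2 hM.ne'
  push_cast
  field_simp

lemma ec_int_mul (M : ℕ) (hM : 0 < M) (k : ℤ) : ec M (k * M) = 1 := by
  unfold ec
  rw [Complex.exp_eq_one_iff]
  use k
  have : (M:ℂ) ≠ 0 := by exact_mod_cast Nat.cast_ne_zero.2 hM.ne'
  push_cast
  field_simp

lemma ec_pow (M : ℕ) (hM : 0 < M) (d : ℤ) (k : ℕ) : ec M (k * d) = (ec M d) ^ k := by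
  induction k with
  | zero => simp [ec]
  | succ n ih =>
    have : ((n:ℤ)+1) * d = n * d + d := by ring
    push_cast
    rw [this, ec_add M hM, ih, pow_succ]

lemma ec_ne_one (M : ℕ) (hM : 0 < M) (d : ℤ) (hd : ¬ (M:ℤ) ∣ d) : ec M d ≠ 1 := by
  unfold ec
  rw [Ne, Complex.exp_eq_one_iff]
  rintro ⟨n, hn⟩
  apply hd
  have hM' : (M:ℂ) ≠ 0 := by exact_mod_cast Nat.cast_ne_zero.2 hM.ne'
  have hπ : ((Real.pi:ℝ):ℂ) ≠ 0 := by exact_mod_cast Complex.ofReal_ne_zero.2 Real.pi_ne_zero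
  have h2 : (d:ℂ) = M * n := by
    have hI := Complex.I_ne_zero
    have h2πI : (2 : ℂ) * Real.pi * Complex.I ≠ 0 := by
      simp [Real.pi_ne_zero, Complex.I_ne_zero, Complex.ofReal_ne_zero]
    field_simp at hn
    refine mul_left_cancel₀ h2πI ?_
    linear_combination (2 * (Real.pi:ℂ) * Complex.I) * hn
  exact ⟨n, by exact_mod_cast h2⟩

lemma ec_sum (M : ℕ) (hM : 0 < M) (d : ℤ) :
    ∑ k ∈ range M, ec M (k * d) = if (M:ℤ) ∣ d then (M:ℂ) else 0 := by
  by_cases h : (M:ℤ) ∣ d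
  · obtain ⟨c, rfl⟩ := h
    rw [if_pos ⟨c, rfl⟩]
    have : ∀ k ∈ range M, ec M (k * ((M:ℤ) * c)) = 1 := by
      intro k _
      rw [show (k:ℤ) * ((M:ℤ)*c) = (k*c) * M by ring, ec_int_mul M hM]
    rw [Finset.sum_congr rfl this]
    simp
  · rw [if_neg h]
    have h1 : ec M d ≠ 1 := ec_ne_one M hM d h
    have : ∑ k ∈ range M, ec M (k * d) = ∑ k ∈ range M, (ec M d) ^ k := by
      apply Finset.sum_congr rfl
      intro k _; exact ec_pow M hM d k
    rw [this, geom_sum_eq h1]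
    have : ec M d ^ M = 1 := by
      rw [← ec_pow M hM, show (M:ℤ) * d = d * M by ring]
      exact ec_int_mul M hM d
    rw [this]
    simp

/-! ### Shift lemmas -/

variable {α : Type*} [AddCommMonoid α]

lemma sum_range_shift (M : ℕ) (hM : 0 < M) (f : ℤ → α) (hf : ∀ ℓ : ℤ, f (ℓ + M) = f ℓ) :
    ∑ j ∈ range M, f ((j:ℤ) + 1) = ∑ j ∈ range M, f (j:ℤ) := by
  obtain ⟨m, rfl⟩ := Nat.exists_eq_succ_of_ne_zero hM.ne'
  rw [Finset.sum_range_succ, Finset.sum_range_succ']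
  congr 1
  have h0 := hf 0
  rw [zero_add] at h0
  calc f ((m:ℤ) + 1) = f ((m.succ : ℕ) : ℤ) := by push_cast; ring_nf
    _ = f 0 := h0
    _ = f ((0:ℕ):ℤ) := by norm_num

lemma sum_range_shift_int (M : ℕ) (hM : 0 < M) (f : ℤ → α) (hf : ∀ ℓ : ℤ, f (ℓ + M) = f ℓ)
    (c : ℤ) : ∑ j ∈ range M, f (c + j) = ∑ j ∈ range M, f (j:ℤ) := by
  induction c using Int.induction_on with
  | zero => simp
  | succ k ih =>
    rw [← ih]
    have := sum_range_shift M hM (fun ℓ => f (k + ℓ)) (fun ℓ => by beta_reduce; rw [← add_assoc]; exact hf _)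
    rw [← this]
    apply Finset.sum_congr rfl
    intro j _
    congr 1
    ring
  | pred k ih =>
    rw [← ih]
    have key := sum_range_shift M hM (fun ℓ => f (-(k:ℤ) - 1 + ℓ)) (fun ℓ => by beta_reduce; rw [← add_assoc]; exact hf _)
    have h2 : ∑ j ∈ range M, f (-(k:ℤ) + ↑j) = ∑ j ∈ range M, f (-(k:ℤ) - 1 + ((j:ℤ) + 1)) := by
      apply Finset.sum_congr rfl
      intro j _
      congr 1
      ring
    rw [h2]
    exact key.symm

lemma sum_idx_eq_range (N : ℕ) (hN : 0 < N) (f : ℤ → α)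
    (hf : ∀ ℓ : ℤ, f (ℓ + 2 * N) = f ℓ) :
    ∑ ℓ ∈ Finset.Icc (-(N:ℤ) + 1) (N:ℤ), f ℓ = ∑ j ∈ range (2 * N), f (j:ℤ) := by
  have hM : 0 < 2 * N := by omega
  have hf' : ∀ ℓ : ℤ, f (ℓ + ((2*N : ℕ):ℤ)) = f ℓ := by intro ℓ; push_cast; exact_mod_cast hf ℓ
  rw [← sum_range_shift_int (2*N) hM f hf' (-(N:ℤ) + 1)]
  apply Finset.sum_nbij' (fun ℓ => (ℓ + (N:ℤ) - 1).toNat) (fun j => -(N:ℤ) + 1 + j)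
  · intro ℓ hℓ
    simp only [Finset.mem_Icc] at hℓ
    simp only [Finset.mem_range]
    omega
  · intro j hj
    simp only [Finset.mem_range] at hj
    simp only [Finset.mem_Icc]
    omega
  · intro ℓ hℓ
    simp only [Finset.mem_Icc] at hℓ
    omega
  · intro j hj
    simp only [Finset.mem_range] at hj
    omega
  · intro ℓ hℓ
    simp only [Finset.mem_Icc] at hℓ
    congr 1
    omega

lemma sum_idx_shift (N : ℕ) (hN : 0 < N) (f : ℤ → α)
    (hf : ∀ ℓ : ℤ, f (ℓ + 2 * (N:ℤ)) = f ℓ) :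
    ∑ ℓ ∈ idx N, f (ℓ + 1) = ∑ ℓ ∈ idx N, f ℓ := by
  have hf' : ∀ ℓ : ℤ, f (ℓ + ((2*N:ℕ):ℤ)) = f ℓ := by
    intro ℓ
    push_cast
    exact hf ℓ
  calc ∑ ℓ ∈ idx N, f (ℓ + 1)
      = ∑ j ∈ range (2*N), f ((j:ℤ)+1) := by
        apply sum_idx_eq_range N hN (fun ℓ => f (ℓ+1))
        intro ℓ
        show f (ℓ + 2 * (N:ℤ) + 1) = f (ℓ + 1)
        rw [show ℓ + 2*(N:ℤ) + 1 = (ℓ+1) + 2*(N:ℤ) by ring, hf]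
    _ = ∑ j ∈ range (2*N), f (j:ℤ) := sum_range_shift (2*N) (by omega) f hf'
    _ = ∑ ℓ ∈ idx N, f ℓ := (sum_idx_eq_range N hN f hf).symm

end StmtAux

namespace StmtAux
open Finset Real

lemma ec_conj (M : ℕ) (d : ℤ) : (starRingEnd ℂ) (ec M d) = ec M (-d) := by
  unfold ec
  rw [← Complex.exp_conj]
  congr 1
  simp [map_div₀, map_mul, Complex.conj_I, map_ofNat]

def ft (M : ℕ) (a : ℤ → ℝ) (k : ℕ) : ℂ := ∑ ℓ ∈ range M, (a ℓ : ℂ) * ec M (k * ℓ)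

lemma ft_conj (M : ℕ) (a : ℤ → ℝ) (k : ℕ) :
    (starRingEnd ℂ) (ft M a k) = ∑ m ∈ range M, (a m : ℂ) * ec M (-(k * m)) := by
  unfold ft
  rw [map_sum]
  apply Finset.sum_congr rfl
  intro m _
  rw [map_mul, Complex.conj_ofReal, ec_conj]

lemma parseval (M : ℕ) (hM : 0 < M) (a : ℤ → ℝ) :
    ∑ k ∈ range M, (Complex.normSq (ft M a k) : ℂ) = (M:ℂ) * ∑ ℓ ∈ range M, ((a ℓ : ℂ))^2 := by
  have step1 : ∀ k ∈ range M, (Complex.normSq (ft M a k) : ℂ)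
      = ∑ ℓ ∈ range M, ∑ m ∈ range M, (a ℓ : ℂ) * (a m : ℂ) * ec M (k * (ℓ - m)) := by
    intro k _
    rw [← Complex.mul_conj (ft M a k), ft_conj]
    unfold ft
    rw [Finset.sum_mul]
    apply Finset.sum_congr rfl
    intro ℓ _
    rw [Finset.mul_sum]
    apply Finset.sum_congr rfl
    intro m _
    have : ec M (k * ℓ) * ec M (-(k * m)) = ec M (k * (ℓ - m)) := by
      rw [← ec_add M hM]
      congr 1
      ring
    calc (a ℓ : ℂ) * ec M (k * ℓ) * ((a m : ℂ) * ec M (-(k*m)))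
        = (a ℓ : ℂ) * (a m : ℂ) * (ec M (k*ℓ) * ec M (-(k*m))) := by ring
      _ = (a ℓ : ℂ) * (a m : ℂ) * ec M (k * (ℓ - m)) := by rw [this]
  rw [Finset.sum_congr rfl step1, Finset.sum_comm]
  have step2 : ∀ ℓ ∈ range M, ∑ k ∈ range M, ∑ m ∈ range M,
      (a ℓ : ℂ) * (a m : ℂ) * ec M (k * (ℓ - m)) = (M:ℂ) * (a ℓ : ℂ)^2 := by
    intro ℓ hℓ
    rw [Finset.sum_comm]
    have inner : ∀ m ∈ range M, ∑ k ∈ range M, (a ℓ : ℂ) * (a m : ℂ) * ec M (k * (ℓ - m))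
        = if m = ℓ then (M:ℂ) * (a ℓ:ℂ)^2 else 0 := by
      intro m hm
      rw [← Finset.mul_sum, ec_sum M hM]
      have : ((M:ℤ) ∣ ((ℓ:ℤ) - m)) ↔ m = ℓ := by
        constructor
        · intro hd
          have hb : |(ℓ:ℤ) - m| < M := by
            simp only [Finset.mem_range] at hℓ hm
            rw [abs_lt]
            omega
          have := Int.eq_zero_of_abs_lt_dvd hd hb
          omega
        · rintro rfl; simp
      by_cases h : m = ℓ
      · rw [if_pos ((this.2 h)), if_pos h, h]
        ring
      · rw [if_neg (fun hd => h (this.1 hd)), if_neg h, mul_zero]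
    rw [Finset.sum_congr rfl inner, Finset.sum_ite_eq' (range M) ℓ, if_pos hℓ]
  rw [Finset.sum_congr rfl step2, ← Finset.mul_sum]

lemma parseval_real (M : ℕ) (hM : 0 < M) (a : ℤ → ℝ) :
    ∑ k ∈ range M, Complex.normSq (ft M a k) = (M:ℝ) * ∑ ℓ ∈ range M, (a ℓ)^2 := by
  have := parseval M hM a
  exact_mod_cast this

lemma ft_shift (M : ℕ) (hM : 0 < M) (a : ℤ → ℝ) (hper : ∀ ℓ : ℤ, a (ℓ + M) = a ℓ) (k : ℕ) :
    ft M (fun ℓ => a (ℓ + 1)) k = ec M (-(k:ℤ)) * ft M a k := by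
  have hh : ∀ ℓ : ℤ, (fun ℓ => (a ℓ : ℂ) * ec M (k * (ℓ - 1))) (ℓ + M)
      = (fun ℓ => (a ℓ : ℂ) * ec M (k * (ℓ - 1))) ℓ := by
    intro ℓ
    simp only [hper]
    congr 1
    rw [show (k:ℤ) * (ℓ + M - 1) = k * (ℓ - 1) + k * M by ring, ec_add M hM, ec_int_mul M hM,
      mul_one]
  have := sum_range_shift M hM (fun ℓ => (a ℓ : ℂ) * ec M (k * (ℓ - 1))) hh
  simp only [add_sub_cancel_right] at this
  unfold ft
  rw [this]
  rw [Finset.mul_sum]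
  apply Finset.sum_congr rfl
  intro j _
  rw [show (k:ℤ) * ((j:ℤ) - 1) = -(k:ℤ) + k * j by ring, ec_add M hM]
  ring

lemma ft_sub (M : ℕ) (a b : ℤ → ℝ) (k : ℕ) :
    ft M (fun ℓ => a ℓ - b ℓ) k = ft M a k - ft M b k := by
  unfold ft
  rw [← Finset.sum_sub_distrib]
  apply Finset.sum_congr rfl
  intro j _
  push_cast
  ring

lemma normSq_ec_sub_one (M : ℕ) (hM : 0 < M) (k : ℕ) :
    Complex.normSq (ec M (-(k:ℤ)) - 1) = 4 * Real.sin (Real.pi * k / M)^2 := by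
  have hθ : ec M (-(k:ℤ)) = Complex.exp ((-(2 * Real.pi * k / M) : ℝ) * Complex.I) := by
    unfold ec
    congr 1
    push_cast
    ring
  rw [hθ]
  rw [Complex.normSq_apply]
  simp only [Complex.sub_re, Complex.sub_im, Complex.exp_ofReal_mul_I_re,
    Complex.exp_ofReal_mul_I_im, Complex.one_re, Complex.one_im]
  have hcos : Real.cos (-(2 * Real.pi * k / M)) = Real.cos (2 * (Real.pi * k / M)) := by
    rw [Real.cos_neg]; ring_nf
  have hsin2 : Real.sin (Real.pi * k / M) ^ 2 = 1/2 - Real.cos (2 * (Real.pi * k / M)) / 2 :=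
    Real.sin_sq_eq_half_sub _
  have hpyth := Real.sin_sq_add_cos_sq (-(2 * Real.pi * k / M))
  nlinarith [hpyth, hcos, hsin2]

lemma sin_pos_piM (M : ℕ) (hM : 2 ≤ M) : 0 < Real.sin (Real.pi / M) := by
  apply Real.sin_pos_of_pos_of_lt_pi
  · positivity
  · have h1 : (1:ℝ) < M := by exact_mod_cast hM.trans_lt' one_lt_two
    rw [div_lt_iff₀ (by positivity)]
    nlinarith [Real.pi_pos]

lemma sinsq_mono (M : ℕ) (hM : 2 ≤ M) (k : ℕ) (hk1 : 1 ≤ k) (hk2 : k < M) :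
    Real.sin (Real.pi / M)^2 ≤ Real.sin (Real.pi * k / M)^2 := by
  have hM0 : (0:ℝ) < M := by positivity
  have hπ := Real.pi_pos
  have hk1' : (1:ℝ) ≤ (k:ℝ) := by exact_mod_cast hk1
  have h2M : (2:ℝ) ≤ (M:ℝ) := by exact_mod_cast hM
  have hπM : 0 < Real.pi / M := by positivity
  have h1M : Real.pi / M ≤ Real.pi * k / M := by gcongr; nlinarith
  have hs1 : 0 ≤ Real.sin (Real.pi / M) := (sin_pos_piM M hM).le
  have key : Real.sin (Real.pi / M) ≤ Real.sin (Real.pi * k / M) := by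
    rcases le_or_gt (Real.pi * k / M) (Real.pi / 2) with h | h
    · apply Real.sin_le_sin_of_le_of_le_pi_div_two ?_ h h1M
      linarith
    · nth_rewrite 2 [← Real.sin_pi_sub]
      have hkM : (k:ℝ) ≤ (M:ℝ) - 1 := by
        have : (k:ℝ) + 1 ≤ M := by exact_mod_cast hk2
        linarith
      have hx : Real.pi * k / M ≤ Real.pi - Real.pi / M := by
        have h1 : Real.pi * k ≤ Real.pi * ((M:ℝ) - 1) := by nlinarith
        have h2 : Real.pi * k / M ≤ Real.pi * ((M:ℝ) - 1) / M := by gcongr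
        have h3 : Real.pi * ((M:ℝ) - 1) / M = Real.pi - Real.pi / M := by
          field_simp
        linarith
      apply Real.sin_le_sin_of_le_of_le_pi_div_two
      · linarith
      · linarith
      · linarith

  have hs2 : 0 ≤ Real.sin (Real.pi * k / M) := hs1.trans key
  nlinarith

theorem poincare (M : ℕ) (hM : 2 ≤ M) (a : ℤ → ℝ) (hper : ∀ ℓ : ℤ, a (ℓ + (M:ℤ)) = a ℓ)
    (hmean : ∑ j ∈ range M, a (j:ℤ) = 0) :
    4 * Real.sin (Real.pi / M)^2 * ∑ j ∈ range M, (a (j:ℤ))^2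
      ≤ ∑ j ∈ range M, (a ((j:ℤ) + 1) - a (j:ℤ))^2 := by
  have hM0 : 0 < M := by omega
  set D : ℤ → ℝ := fun ℓ => a (ℓ + 1) - a ℓ with hD
  have hftD : ∀ k : ℕ, ft M D k = (ec M (-(k:ℤ)) - 1) * ft M a k := by
    intro k
    rw [hD]
    rw [ft_sub M (fun ℓ => a (ℓ+1)) a k, ft_shift M hM0 a hper k]
    ring
  have hnormD : ∀ k ∈ range M, Complex.normSq (ft M D k)
      = 4 * Real.sin (Real.pi * k / M)^2 * Complex.normSq (ft M a k) := by
    intro k _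
    rw [hftD k, Complex.normSq_mul, normSq_ec_sub_one M hM0 k]
  have h0 : ft M a 0 = 0 := by
    unfold ft
    have : ∀ ℓ ∈ range M, (a ℓ : ℂ) * ec M ((0:ℕ) * ℓ) = (a ℓ : ℂ) := by
      intro ℓ _
      have : ec M ((0:ℕ) * (ℓ:ℤ)) = 1 := by
        rw [show ((0:ℕ):ℤ) * (ℓ:ℤ) = 0 by ring]
        unfold ec
        simp
      rw [this, mul_one]
    rw [Finset.sum_congr rfl this]
    exact_mod_cast congrArg (Complex.ofReal) hmean
  have hPA := parseval_real M hM0 a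
  have hPD := parseval_real M hM0 D
  have hbound : ∀ k ∈ range M,
      4 * Real.sin (Real.pi / M)^2 * Complex.normSq (ft M a k) ≤ Complex.normSq (ft M D k) := by
    intro k hk
    rw [hnormD k hk]
    rcases Nat.eq_zero_or_pos k with rfl | hk1
    · rw [h0]
      simp
    · have := sinsq_mono M hM k hk1 (Finset.mem_range.1 hk)
      nlinarith [Complex.normSq_nonneg (ft M a k)]
  have hsum : ∑ k ∈ range M, 4 * Real.sin (Real.pi / M)^2 * Complex.normSq (ft M a k)
      ≤ ∑ k ∈ range M, Complex.normSq (ft M D k) := Finset.sum_le_sum hbound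
  rw [← Finset.mul_sum, hPA, hPD] at hsum
  have hM0' : (0:ℝ) < M := by positivity
  calc 4 * Real.sin (Real.pi / M)^2 * ∑ j ∈ range M, (a (j:ℤ))^2
      = (4 * Real.sin (Real.pi / M)^2 * ((M:ℝ) * ∑ j ∈ range M, (a (j:ℤ))^2)) / M := by
        field_simp
    _ ≤ ((M:ℝ) * ∑ j ∈ range M, (D (j:ℤ))^2) / M := by gcongr
    _ = ∑ j ∈ range M, (D (j:ℤ))^2 := by field_simp
    

end StmtAux

namespace StmtAux
open Finset Real


lemma bD_yF (N : ℕ) (hN : N ≠ 0) (F : ℝ) (ℓ : ℤ) : bD N (yF N F) ℓ = F := by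
  unfold bD yF
  have : ((N:ℝ)) ≠ 0 := Nat.cast_ne_zero.2 hN
  push_cast
  field_simp
  ring

lemma bD_comb (N : ℕ) (F : ℝ) (hN : N ≠ 0) (u : ℤ → ℝ) (s t : ℝ) (ℓ : ℤ) :
    bD N (yF N F + s • u + t • u) ℓ = F + (s + t) * bD N u ℓ := by
  have h := bD_yF N hN F ℓ
  unfold bD at *
  simp only [Pi.add_apply, Pi.smul_apply, smul_eq_mul]
  nlinarith [h]

theorem d2E_Ea (N : ℕ) (hN : N ≠ 0) (φ : ℝ → ℝ)
    (hφ : ContDiffOn ℝ 2 φ (Set.Ioi 0)) (F : ℝ) (hF : 0 < F) (u : ℤ → ℝ) :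
    d2E (Ea N φ) (yF N F) u u = (N : ℝ)⁻¹ * ∑ ℓ ∈ idx N,
      (deriv (deriv φ) F * (bD N u ℓ)^2
        + deriv (deriv φ) (2*F) * (bD N u ℓ + bD N u (ℓ+1))^2) := by
  classical
  set a : ℤ → ℝ := bD N u with ha
  set G : ℝ → ℝ := fun r => (N:ℝ)⁻¹ * ∑ ℓ ∈ idx N,
    (φ (F + r * a ℓ) + φ (2*F + r * (a ℓ + a (ℓ+1)))) with hG
  set G' : ℝ → ℝ := fun r => (N:ℝ)⁻¹ * ∑ ℓ ∈ idx N,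
    (deriv φ (F + r * a ℓ) * a ℓ
      + deriv φ (2*F + r * (a ℓ + a (ℓ+1))) * (a ℓ + a (ℓ+1))) with hG'
  -- Ea along the path equals G (s+t)
  have hEaG : ∀ s t : ℝ, Ea N φ (yF N F + s • u + t • u) = G (s + t) := by
    intro s t
    unfold Ea
    rw [hG]
    congr 1
    apply Finset.sum_congr rfl
    intro ℓ _
    rw [bD_comb N F hN u s t ℓ, bD_comb N F hN u s t (ℓ+1)]
    congr 1
    congr 1
    ring
  -- the smallness radius
  set C : ℝ := 1 + ∑ ℓ ∈ idx N, (|a ℓ| + |a ℓ + a (ℓ+1)|) with hC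
  have hCpos : 0 < C := by
    have : 0 ≤ ∑ ℓ ∈ idx N, (|a ℓ| + |a ℓ + a (ℓ+1)|) :=
      Finset.sum_nonneg (fun ℓ _ => by positivity)
    rw [hC]; linarith
  have hCa : ∀ ℓ ∈ idx N, |a ℓ| ≤ C ∧ |a ℓ + a (ℓ+1)| ≤ C := by
    intro ℓ hℓ
    have h1 : |a ℓ| + |a ℓ + a (ℓ+1)| ≤ ∑ ℓ ∈ idx N, (|a ℓ| + |a ℓ + a (ℓ+1)|) :=
      Finset.single_le_sum (f := fun ℓ => |a ℓ| + |a ℓ + a (ℓ+1)|)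
        (fun ℓ _ => by positivity) hℓ
    constructor <;> [skip; skip] <;>
      · rw [hC]
        have := abs_nonneg (a ℓ)
        have := abs_nonneg (a ℓ + a (ℓ+1))
        linarith
  set δ : ℝ := F / C with hδdef
  have hδ : 0 < δ := div_pos hF hCpos
  -- positivity of arguments in the ball
  have hpos : ∀ r : ℝ, |r| < δ → ∀ ℓ ∈ idx N,
      0 < F + r * a ℓ ∧ 0 < 2*F + r * (a ℓ + a (ℓ+1)) := by
    intro r hr ℓ hℓ
    obtain ⟨h1, h2⟩ := hCa ℓ hℓ
    have hra : |r * a ℓ| < F := by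
      rw [abs_mul]
      calc |r| * |a ℓ| ≤ |r| * C := by
            apply mul_le_mul_of_nonneg_left h1 (abs_nonneg r)
        _ < δ * C := by apply mul_lt_mul_of_pos_right hr hCpos
        _ = F := by rw [hδdef]; field_simp
    have hrb : |r * (a ℓ + a (ℓ+1))| < F := by
      rw [abs_mul]
      calc |r| * |a ℓ + a (ℓ+1)| ≤ |r| * C := by
            apply mul_le_mul_of_nonneg_left h2 (abs_nonneg r)
        _ < δ * C := by apply mul_lt_mul_of_pos_right hr hCpos
        _ = F := by rw [hδdef]; field_simp
    rw [abs_lt] at hra hrb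
    constructor <;> linarith
  -- differentiability of φ and deriv φ at positive points
  have hφ1 : ∀ x : ℝ, 0 < x → HasDerivAt φ (deriv φ x) x := by
    intro x hx
    exact ((hφ.differentiableOn (by norm_num)).differentiableAt
      (Ioi_mem_nhds hx)).hasDerivAt
  have hφ2 : ∀ x : ℝ, 0 < x → HasDerivAt (deriv φ) (deriv (deriv φ) x) x := by
    intro x hx
    have hd : ContDiffOn ℝ 1 (deriv φ) (Set.Ioi 0) :=
      hφ.deriv_of_isOpen isOpen_Ioi (by norm_num)
    exact ((hd.differentiableOn (by norm_num)).differentiableAt (Ioi_mem_nhds hx)).hasDerivAt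
  -- G has derivative G' on the ball
  have hGderiv : ∀ r : ℝ, |r| < δ → HasDerivAt G (G' r) r := by
    intro r hr
    rw [hG, hG']
    apply HasDerivAt.const_mul
    apply HasDerivAt.fun_sum
    intro ℓ hℓ
    obtain ⟨hp1, hp2⟩ := hpos r hr ℓ hℓ
    have d1 : HasDerivAt (fun r : ℝ => F + r * a ℓ) (a ℓ) r := by
      simpa using ((hasDerivAt_id r).mul_const (a ℓ)).const_add F
    have d2 : HasDerivAt (fun r : ℝ => 2*F + r * (a ℓ + a (ℓ+1))) (a ℓ + a (ℓ+1)) r := by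
      simpa using ((hasDerivAt_id r).mul_const (a ℓ + a (ℓ+1))).const_add (2*F)
    exact ((hφ1 _ hp1).comp r d1).add ((hφ1 _ hp2).comp r d2)
  -- inner derivative identification
  have hinner : ∀ s : ℝ, |s| < δ →
      deriv (fun t : ℝ => Ea N φ (yF N F + s • u + t • u)) 0 = G' s := by
    intro s hs
    have : (fun t : ℝ => Ea N φ (yF N F + s • u + t • u)) = fun t => G (s + t) := by
      funext t; exact hEaG s t
    rw [this]
    have hshift : HasDerivAt (fun t : ℝ => s + t) 1 0 := by
      simpa using (hasDerivAt_id (0:ℝ)).const_add s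
    have hs0 : HasDerivAt G (G' s) (s + 0) := by simpa using hGderiv s hs
    have h1 : HasDerivAt (fun t : ℝ => G (s + t)) (G' s * 1) 0 := hs0.comp 0 hshift
    simpa using h1.deriv
  -- outer derivative
  have hEq : (fun s : ℝ => deriv (fun t : ℝ => Ea N φ (yF N F + s • u + t • u)) 0)
      =ᶠ[nhds 0] G' := by
    have hball : ∀ᶠ s : ℝ in nhds 0, |s| < δ := by
      have := eventually_abs_sub_lt (0:ℝ) hδ
      simpa using this
    filter_upwards [hball] with s hs
    exact hinner s hs
  unfold d2E
  rw [hEq.deriv_eq]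
  -- derivative of G' at 0
  have hG'deriv : HasDerivAt G' ((N:ℝ)⁻¹ * ∑ ℓ ∈ idx N,
      (deriv (deriv φ) F * (a ℓ)^2 + deriv (deriv φ) (2*F) * (a ℓ + a (ℓ+1))^2)) 0 := by
    rw [hG']
    apply HasDerivAt.const_mul
    apply HasDerivAt.fun_sum
    intro ℓ hℓ
    have d1 : HasDerivAt (fun r : ℝ => F + r * a ℓ) (a ℓ) 0 := by
      simpa using ((hasDerivAt_id (0:ℝ)).mul_const (a ℓ)).const_add F
    have d2 : HasDerivAt (fun r : ℝ => 2*F + r * (a ℓ + a (ℓ+1))) (a ℓ + a (ℓ+1)) 0 := by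
      simpa using ((hasDerivAt_id (0:ℝ)).mul_const (a ℓ + a (ℓ+1))).const_add (2*F)
    have c1 : HasDerivAt (fun r : ℝ => deriv φ (F + r * a ℓ))
        (deriv (deriv φ) F * a ℓ) 0 := by
      have hF0 : HasDerivAt (deriv φ) (deriv (deriv φ) F) (F + 0 * a ℓ) := by
        simpa using hφ2 F hF
      exact hF0.comp 0 d1
    have c2 : HasDerivAt (fun r : ℝ => deriv φ (2*F + r * (a ℓ + a (ℓ+1))))
        (deriv (deriv φ) (2*F) * (a ℓ + a (ℓ+1))) 0 := by
      have hF0 : HasDerivAt (deriv φ) (deriv (deriv φ) (2*F)) (2*F + 0 * (a ℓ + a (ℓ+1))) := by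
        simpa using hφ2 (2*F) (by linarith)
      exact hF0.comp 0 d2
    have := (c1.mul_const (a ℓ)).add (c2.mul_const (a ℓ + a (ℓ+1)))
    convert this using 1
    · rfl
    · ring
  rw [hG'deriv.deriv]


end StmtAux
namespace StmtAux
open Finset Real

lemma quad_formula (N : ℕ) (hN : N ≠ 0) (φ : ℝ → ℝ) (hφ : ContDiffOn ℝ 2 φ (Set.Ioi 0))
    (F : ℝ) (hF : 0 < F) (u : ℤ → ℝ) :
    d2E (Ea N φ) (yF N F) u u = (N : ℝ)⁻¹ *
      (deriv (deriv φ) F * ∑ ℓ ∈ idx N, (bD N u ℓ)^2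
        + deriv (deriv φ) (2*F) * ∑ ℓ ∈ idx N, (bD N u ℓ + bD N u (ℓ+1))^2) := by
  rw [d2E_Ea N hN φ hφ F hF u]
  congr 1
  rw [Finset.sum_add_distrib, Finset.mul_sum, Finset.mul_sum]

lemma bD_periodic (N : ℕ) (u : ℤ → ℝ) (hu : ∀ ℓ : ℤ, u (ℓ + 2*(N:ℤ)) = u ℓ) (ℓ : ℤ) :
    bD N u (ℓ + 2*(N:ℤ)) = bD N u ℓ := by
  unfold bD
  rw [show ℓ + 2*(N:ℤ) - 1 = (ℓ-1) + 2*(N:ℤ) by ring, hu, hu]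

lemma bD_sum_zero (N : ℕ) (hN : 0 < N) (u : ℤ → ℝ) (hu : u ∈ uSet N) :
    ∑ ℓ ∈ idx N, bD N u ℓ = 0 := by
  obtain ⟨hper, hmean⟩ := hu
  have hper' : ∀ ℓ : ℤ, u (ℓ + 2*(N:ℤ)) = u ℓ := fun ℓ => hper ℓ
  have hshift := sum_idx_shift N hN (fun ℓ => u (ℓ - 1))
    (fun ℓ => by
      show u (ℓ + 2*(N:ℤ) - 1) = u (ℓ - 1)
      rw [show ℓ + 2*(N:ℤ) - 1 = (ℓ-1) + 2*(N:ℤ) by ring, hper'])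
  simp only [add_sub_cancel_right] at hshift
  unfold bD
  rw [← Finset.mul_sum, Finset.sum_sub_distrib]
  rw [← hshift, hmean]
  ring

lemma S2_eq (N : ℕ) (hN : 0 < N) (u : ℤ → ℝ) (hper : ∀ ℓ : ℤ, u (ℓ + 2*(N:ℤ)) = u ℓ) :
    ∑ ℓ ∈ idx N, (bD N u ℓ + bD N u (ℓ+1))^2
      = 4 * ∑ ℓ ∈ idx N, (bD N u ℓ)^2 - ∑ ℓ ∈ idx N, (bD N u (ℓ+1) - bD N u ℓ)^2 := by
  have haper : ∀ ℓ : ℤ, bD N u (ℓ + 2*(N:ℤ)) = bD N u ℓ := bD_periodic N u hper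
  have hsq := sum_idx_shift N hN (fun ℓ => (bD N u ℓ)^2)
    (fun ℓ => by show (bD N u (ℓ + 2*(N:ℤ)))^2 = _; rw [haper])
  have expand : ∀ ℓ ∈ idx N, (bD N u ℓ + bD N u (ℓ+1))^2
      = 2*(bD N u ℓ)^2 + 2*(bD N u (ℓ+1))^2 - (bD N u (ℓ+1) - bD N u ℓ)^2 := by
    intro ℓ _; ring
  rw [Finset.sum_congr rfl expand]
  rw [Finset.sum_sub_distrib, Finset.sum_add_distrib, ← Finset.mul_sum, ← Finset.mul_sum, hsq]
  ring

lemma poincare_applied (N : ℕ) (hN : 2 ≤ N) (u : ℤ → ℝ) (hu : u ∈ uSet N) :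
    4 * Real.sin (Real.pi / ((2*N:ℕ):ℝ))^2 * ∑ ℓ ∈ idx N, (bD N u ℓ)^2
      ≤ ∑ ℓ ∈ idx N, (bD N u (ℓ+1) - bD N u ℓ)^2 := by
  have hN0 : 0 < N := by omega
  have haper : ∀ ℓ : ℤ, bD N u (ℓ + 2*(N:ℤ)) = bD N u ℓ := bD_periodic N u hu.1
  have haper' : ∀ ℓ : ℤ, bD N u (ℓ + ((2*N:ℕ):ℤ)) = bD N u ℓ := by
    intro ℓ; push_cast; exact haper ℓ
  have hmean : ∑ j ∈ range (2*N), bD N u (j:ℤ) = 0 := by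
    rw [← sum_idx_eq_range N hN0 (bD N u) haper]
    exact bD_sum_zero N hN0 u hu
  have hpoin := poincare (2*N) (by omega) (bD N u) haper' hmean
  have e1 : ∑ ℓ ∈ idx N, (bD N u ℓ)^2 = ∑ j ∈ range (2*N), (bD N u (j:ℤ))^2 :=
    sum_idx_eq_range N hN0 (fun ℓ => (bD N u ℓ)^2)
      (fun ℓ => by show (bD N u (ℓ + 2*(N:ℤ)))^2 = _; rw [haper])
  have e2 : ∑ ℓ ∈ idx N, (bD N u (ℓ+1) - bD N u ℓ)^2
      = ∑ j ∈ range (2*N), (bD N u ((j:ℤ)+1) - bD N u (j:ℤ))^2 :=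
    sum_idx_eq_range N hN0 (fun ℓ => (bD N u (ℓ+1) - bD N u ℓ)^2)
      (fun ℓ => by
        show (bD N u (ℓ + 2*(N:ℤ) + 1) - bD N u (ℓ + 2*(N:ℤ)))^2 = _
        rw [show ℓ + 2*(N:ℤ) + 1 = (ℓ+1) + 2*(N:ℤ) by ring, haper, haper])
  rw [e1, e2]
  exact hpoin

lemma u_zero (N : ℕ) (hN : 0 < N) (u : ℤ → ℝ) (hu : u ∈ uSet N)
    (hz : ∀ ℓ ∈ idx N, bD N u ℓ = 0) : u = 0 := by
  obtain ⟨hper, hmean⟩ := hu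
  have haper : ∀ ℓ : ℤ, bD N u (ℓ + 2*(N:ℤ)) = bD N u ℓ := bD_periodic N u hper
  -- periodicity for all multiples
  have hmul : ∀ (k : ℤ) (ℓ : ℤ), bD N u (ℓ + 2*(N:ℤ)*k) = bD N u ℓ := by
    intro k
    induction k using Int.induction_on with
    | zero => simp
    | succ m ih =>
      intro ℓ
      rw [show ℓ + 2*(N:ℤ)*((m:ℤ)+1) = (ℓ + 2*(N:ℤ)*m) + 2*(N:ℤ) by ring, haper, ih]
    | pred m ih =>
      intro ℓ
      have h1 := haper (ℓ + 2*(N:ℤ)*(-(m:ℤ)-1))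
      rw [show ℓ + 2*(N:ℤ)*(-(m:ℤ)-1) + 2*(N:ℤ) = ℓ + 2*(N:ℤ)*(-(m:ℤ)) by ring] at h1
      rw [← h1]
      exact ih ℓ
  have hall : ∀ ℓ : ℤ, bD N u ℓ = 0 := by
    intro ℓ
    have h2N : (0:ℤ) < 2*(N:ℤ) := by positivity
    set r : ℤ := (ℓ + (N:ℤ) - 1) % (2*(N:ℤ)) with hr
    have hr0 : 0 ≤ r := Int.emod_nonneg _ h2N.ne'
    have hrlt : r < 2*(N:ℤ) := Int.emod_lt_of_pos _ h2N
    have hdvd : (2*(N:ℤ)) ∣ (ℓ + (N:ℤ) - 1 - r) := Int.dvd_self_sub_of_emod_eq rfl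
    obtain ⟨k, hk⟩ := hdvd
    have hℓeq : ℓ = (r - (N:ℤ) + 1) + 2*(N:ℤ)*k := by linarith [hk]
    have hmem : r - (N:ℤ) + 1 ∈ idx N := by
      unfold idx
      simp only [Finset.mem_Icc]
      omega
    rw [hℓeq, hmul k]
    exact hz _ hmem
  have hcons : ∀ ℓ : ℤ, u ℓ = u (ℓ - 1) := by
    intro ℓ
    have := hall ℓ
    unfold bD at this
    have hNr : ((N:ℝ)) ≠ 0 := Nat.cast_ne_zero.2 hN.ne'
    have := mul_eq_zero.1 this
    rcases this with h | h
    · exact absurd h hNr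
    · linarith [sub_eq_zero.1 h]
  have hconst : ∀ ℓ : ℤ, u ℓ = u 0 := by
    intro ℓ
    induction ℓ using Int.induction_on with
    | zero => rfl
    | succ m ih =>
      have := hcons ((m:ℤ)+1)
      simp only [add_sub_cancel_right] at this
      rw [this, ih]
    | pred m ih =>
      have h2 : u (-(m:ℤ) - 1) = u 0 := (hcons (-(m:ℤ))).symm.trans ih
      convert h2 using 2
  have hcard : (idx N).card = 2*N := by
    unfold idx
    rw [Int.card_Icc]
    omega
  have hsum : ∑ ℓ ∈ idx N, u ℓ = (2*N : ℝ) * u 0 := by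
    rw [Finset.sum_congr rfl (fun ℓ _ => hconst ℓ), Finset.sum_const, hcard]
    push_cast
    ring
  rw [hmean] at hsum
  have hu0 : u 0 = 0 := by
    have h2N : (2*(N:ℝ)) ≠ 0 := by positivity
    rcases mul_eq_zero.1 hsum.symm with h | h
    · exact absurd h h2N
    · exact h
  funext ℓ
  rw [hconst ℓ, hu0]
  simp

end StmtAux
namespace StmtAux
open Finset Real

lemma test_fn (N : ℕ) (hN : 2 ≤ N) :
    ∃ u₀ ∈ uSet N, u₀ ≠ 0 ∧ ∃ W : ℝ, 0 ≤ W ∧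
      ∑ ℓ ∈ idx N, (bD N u₀ ℓ)^2
        = (N:ℝ)^2 * (2 - 2*Real.cos (Real.pi/(N:ℝ))) * W ∧
      ∑ ℓ ∈ idx N, (bD N u₀ (ℓ+1) - bD N u₀ ℓ)^2
        = (N:ℝ)^2 * (2 - 2*Real.cos (Real.pi/(N:ℝ)))^2 * W := by
  have hN0 : 0 < N := by omega
  have hNr : (0:ℝ) < N := by exact_mod_cast hN0
  have hNne : (N:ℝ) ≠ 0 := hNr.ne'
  set s : ℤ → ℝ := fun ℓ => Real.sin (Real.pi * ℓ / N) with hs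
  have hper : ∀ ℓ : ℤ, s (ℓ + 2*(N:ℤ)) = s ℓ := by
    intro ℓ
    simp only [hs]
    have harg : Real.pi * (((ℓ:ℝ) + 2*(N:ℝ))) / N = Real.pi * ℓ / N + 2*Real.pi := by
      field_simp
    push_cast
    rw [harg, Real.sin_add_two_pi]
  have h3 : ∀ ℓ : ℤ, s (ℓ+1) + s (ℓ-1) = 2 * Real.cos (Real.pi/(N:ℝ)) * s ℓ := by
    intro ℓ
    simp only [hs]
    have e1 : Real.pi * ((ℓ:ℝ)+1)/N = Real.pi * ℓ / N + Real.pi/N := by field_simp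
    have e2 : Real.pi * ((ℓ:ℝ)-1)/N = Real.pi * ℓ / N - Real.pi/N := by field_simp
    push_cast
    rw [e1, e2, Real.sin_add, Real.sin_sub]
    ring
  have hrange0 : ∑ j ∈ range (2*N), s (j:ℤ) = 0 := by
    have him : ∀ j ∈ range (2*N), s ((j:ℕ):ℤ) = (ec (2*N) ((j:ℤ) * 1)).im := by
      intro j _
      rw [mul_one]
      simp only [hs]
      unfold ec
      have hC : ((N:ℂ)) ≠ 0 := by exact_mod_cast Nat.cast_ne_zero.2 hN0.ne'
      rw [show 2 * (Real.pi:ℂ) * Complex.I * ((j:ℤ):ℂ) / ((2*N:ℕ):ℂ)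
          = ((Real.pi * ((j:ℕ):ℝ) / (N:ℝ) : ℝ):ℂ) * Complex.I by push_cast; field_simp]
      rw [Complex.exp_ofReal_mul_I_im]
      push_cast
      ring_nf
    rw [Finset.sum_congr rfl him, ← Complex.im_sum]
    rw [ec_sum (2*N) (by omega) 1]
    rw [if_neg ?_]
    · simp
    · intro hdvd
      have := Int.le_of_dvd one_pos hdvd
      omega
  have hmean : ∑ ℓ ∈ idx N, s ℓ = 0 := by
    have h := sum_idx_eq_range N hN0 s hper
    calc ∑ ℓ ∈ idx N, s ℓ = ∑ j ∈ range (2*N), s (j:ℤ) := h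
      _ = 0 := hrange0
  have hsinpos : 0 < Real.sin (Real.pi/(N:ℝ)) := by
    apply Real.sin_pos_of_pos_of_lt_pi
    · positivity
    · have h1 : (1:ℝ) < N := by
        have : (2:ℝ) ≤ N := by exact_mod_cast hN
        linarith
      rw [div_lt_iff₀ hNr]
      nlinarith [Real.pi_pos]
  have hne : s ≠ 0 := by
    intro h
    have h1 : s 1 = 0 := by rw [h]; rfl
    simp only [hs] at h1
    have harg : Real.pi * ((1:ℤ):ℝ) / N = Real.pi / N := by push_cast; ring
    rw [harg] at h1
    linarith
  set W := ∑ ℓ ∈ idx N, (s ℓ)^2 with hW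
  have hW0 : 0 ≤ W := Finset.sum_nonneg fun ℓ _ => sq_nonneg _
  have hkey : ∀ ℓ : ℤ, bD N s (ℓ+1) - bD N s ℓ
      = (N:ℝ) * (2*Real.cos (Real.pi/(N:ℝ)) - 2) * s ℓ := by
    intro ℓ
    unfold bD
    simp only [add_sub_cancel_right]
    linear_combination (N:ℝ) * h3 ℓ
  have hSd : ∑ ℓ ∈ idx N, (bD N s (ℓ+1) - bD N s ℓ)^2
      = (N:ℝ)^2*(2 - 2*Real.cos (Real.pi/(N:ℝ)))^2 * W := by
    calc ∑ ℓ ∈ idx N, (bD N s (ℓ+1) - bD N s ℓ)^2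
        = ∑ ℓ ∈ idx N, ((N:ℝ) * (2*Real.cos (Real.pi/(N:ℝ)) - 2))^2 * (s ℓ)^2 := by
          apply Finset.sum_congr rfl
          intro ℓ _
          rw [hkey ℓ]
          ring
      _ = ((N:ℝ) * (2*Real.cos (Real.pi/(N:ℝ)) - 2))^2 * W := by rw [← Finset.mul_sum]
      _ = (N:ℝ)^2*(2 - 2*Real.cos (Real.pi/(N:ℝ)))^2 * W := by ring
  have e1 : ∑ ℓ ∈ idx N, (s (ℓ-1))^2 = W := by
    have h := sum_idx_shift N hN0 (fun ℓ => (s (ℓ-1))^2)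
      (fun ℓ => by
        show (s (ℓ + 2*(N:ℤ) - 1))^2 = (s (ℓ-1))^2
        rw [show ℓ + 2*(N:ℤ) - 1 = (ℓ-1) + 2*(N:ℤ) by ring, hper])
    simp only [add_sub_cancel_right] at h
    rw [hW]
    exact h.symm
  have e2 : ∑ ℓ ∈ idx N, s ℓ * s (ℓ+1) = ∑ ℓ ∈ idx N, s (ℓ-1) * s ℓ := by
    have h := sum_idx_shift N hN0 (fun ℓ => s (ℓ-1) * s ℓ)
      (fun ℓ => by
        show s (ℓ + 2*(N:ℤ) - 1) * s (ℓ + 2*(N:ℤ)) = s (ℓ-1) * s ℓ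
        rw [show ℓ + 2*(N:ℤ) - 1 = (ℓ-1) + 2*(N:ℤ) by ring, hper, hper])
    simp only [add_sub_cancel_right] at h
    exact h
  have e4 : ∑ ℓ ∈ idx N, s (ℓ-1) * s ℓ = Real.cos (Real.pi/(N:ℝ)) * W := by
    have hcomb : ∀ ℓ ∈ idx N, s ℓ * s (ℓ+1) + s (ℓ-1) * s ℓ
        = 2*Real.cos (Real.pi/(N:ℝ)) * (s ℓ)^2 := by
      intro ℓ _
      linear_combination (s ℓ) * h3 ℓ
    have hsum2 : ∑ ℓ ∈ idx N, (s ℓ * s (ℓ+1) + s (ℓ-1) * s ℓ)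
        = 2*Real.cos (Real.pi/(N:ℝ)) * W := by
      rw [Finset.sum_congr rfl hcomb, ← Finset.mul_sum]
    rw [Finset.sum_add_distrib, e2] at hsum2
    linarith
  have hS1 : ∑ ℓ ∈ idx N, (bD N s ℓ)^2
      = (N:ℝ)^2 * (2 - 2*Real.cos (Real.pi/(N:ℝ))) * W := by
    have expand : ∀ ℓ ∈ idx N, (bD N s ℓ)^2
        = (N:ℝ)^2 * ((s ℓ)^2 - 2*(s (ℓ-1) * s ℓ) + (s (ℓ-1))^2) := by
      intro ℓ _
      unfold bD
      ring
    rw [Finset.sum_congr rfl expand, ← Finset.mul_sum]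
    have hinner : ∑ ℓ ∈ idx N, ((s ℓ)^2 - 2*(s (ℓ-1)*s ℓ) + (s (ℓ-1))^2)
        = W - 2*(Real.cos (Real.pi/(N:ℝ))*W) + W := by
      rw [Finset.sum_add_distrib, Finset.sum_sub_distrib, ← Finset.mul_sum, e1, e4, hW]
    rw [hinner]
    ring
  exact ⟨s, ⟨hper, hmean⟩, hne, W, hW0, hS1, hSd⟩

end StmtAux

open StmtAux in
theorem stmt3 (N : ℕ) (hN : 2 ≤ N) (φ : ℝ → ℝ)
    (hφ : ContDiffOn ℝ 2 φ (Set.Ioi 0)) (F : ℝ) (hF : 0 < F)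
    (h2F : deriv (deriv φ) (2 * F) ≤ 0) :
    (∀ u ∈ uSet N, u ≠ 0 → 0 < d2E (Ea N φ) (yF N F) u u) ↔
      0 < deriv (deriv φ) F + 4 * deriv (deriv φ) (2 * F)
          - (N : ℝ)⁻¹ ^ 2 * (muEps N) ^ 2 * deriv (deriv φ) (2 * F) := by
  have hN0 : 0 < N := by omega
  have hNne : N ≠ 0 := by omega
  have hNr : (0:ℝ) < N := by exact_mod_cast hN0
  have hNrne : (N:ℝ) ≠ 0 := hNr.ne'
  have hhalf := Real.sin_sq_eq_half_sub (Real.pi * (N:ℝ)⁻¹ / 2)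
  have h2x : 2 * (Real.pi * (N:ℝ)⁻¹ / 2) = Real.pi / N := by field_simp
  rw [h2x] at hhalf
  have hE2 : (N:ℝ)⁻¹^2 * (muEps N)^2 = 2 - 2*Real.cos (Real.pi/(N:ℝ)) := by
    unfold muEps
    have hsimp : (N:ℝ)⁻¹^2 * (2 * Real.sin (Real.pi * (N:ℝ)⁻¹/2) / (N:ℝ)⁻¹)^2
        = 4 * Real.sin (Real.pi * (N:ℝ)⁻¹/2)^2 := by
      field_simp
      ring
    rw [hsimp]
    linarith
  have hE2' : 4 * Real.sin (Real.pi / ((2*N:ℕ):ℝ))^2 = 2 - 2*Real.cos (Real.pi/(N:ℝ)) := by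
    have harg : Real.pi / ((2*N:ℕ):ℝ) = Real.pi * (N:ℝ)⁻¹ / 2 := by
      push_cast
      rw [eq_comm, div_eq_div_iff (by positivity) (by positivity)]
      field_simp
    rw [harg]
    linarith
  constructor
  · intro hpos
    obtain ⟨u₀, hu₀, hne, W, hW0, hS1, hSd⟩ := test_fn N hN
    obtain ⟨hu₀per, hu₀mean⟩ := hu₀
    have hq := quad_formula N hNne φ hφ F hF u₀
    have hQpos := hpos u₀ ⟨hu₀per, hu₀mean⟩ hne
    rw [hq, S2_eq N hN0 u₀ hu₀per, hS1, hSd] at hQpos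
    have hγ0 : 0 ≤ 2 - 2*Real.cos (Real.pi/(N:ℝ)) := by
      linarith [Real.cos_le_one (Real.pi/(N:ℝ))]
    have hfact : (N:ℝ)⁻¹ * (deriv (deriv φ) F * ((N:ℝ)^2 * (2 - 2*Real.cos (Real.pi/(N:ℝ))) * W)
          + deriv (deriv φ) (2*F) * (4*((N:ℝ)^2 * (2 - 2*Real.cos (Real.pi/(N:ℝ))) * W)
            - (N:ℝ)^2 * (2 - 2*Real.cos (Real.pi/(N:ℝ)))^2 * W))
        = ((N:ℝ) * (2 - 2*Real.cos (Real.pi/(N:ℝ))) * W)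
            * (deriv (deriv φ) F + 4*deriv (deriv φ) (2*F)
              - (2 - 2*Real.cos (Real.pi/(N:ℝ))) * deriv (deriv φ) (2*F)) := by
      field_simp
      ring
    rw [hfact] at hQpos
    rw [hE2]
    have hK : 0 ≤ (N:ℝ) * (2 - 2*Real.cos (Real.pi/(N:ℝ))) * W :=
      mul_nonneg (mul_nonneg hNr.le hγ0) hW0
    by_contra hle
    push_neg at hle
    nlinarith [hQpos, hK, hle]
  · intro hT u hu hne
    obtain ⟨huper, humean⟩ := hu
    have hq := quad_formula N hNne φ hφ F hF u
    rw [hq, S2_eq N hN0 u huper]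
    have hpoin := poincare_applied N hN u ⟨huper, humean⟩
    rw [hE2'] at hpoin
    have hS1nn : 0 ≤ ∑ ℓ ∈ idx N, (bD N u ℓ)^2 :=
      Finset.sum_nonneg fun ℓ _ => sq_nonneg _
    have hS1pos : 0 < ∑ ℓ ∈ idx N, (bD N u ℓ)^2 := by
      rcases hS1nn.lt_or_eq with h | h
      · exact h
      · exfalso
        apply hne
        apply u_zero N hN0 u ⟨huper, humean⟩
        intro ℓ hℓ
        have hz := (Finset.sum_eq_zero_iff_of_nonneg
          (fun ℓ _ => sq_nonneg (bD N u ℓ))).1 h.symm ℓ hℓ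
        exact pow_eq_zero_iff (two_ne_zero) |>.1 hz
    rw [hE2] at hT
    have hεpos : (0:ℝ) < (N:ℝ)⁻¹ := by positivity
    apply mul_pos hεpos
    nlinarith [mul_pos hT hS1pos,
      mul_nonneg (neg_nonneg.2 h2F) (sub_nonneg.2 hpoin)]
end
end

section
/- Let φ ∈ C¹((0,∞); ℝ) and F > 0. Then y_F is a critical point of the quasi-nonlocal QC energy: E_qnl'(y_F)[u] = 0 for every u ∈ 𝒰. -/
open Finset Real

noncomputable section

lemma tel_sum (f : ℤ → ℝ) (a b : ℤ) (hab : a ≤ b) :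
    ∑ ℓ ∈ Finset.Icc a b, (f ℓ - f (ℓ - 1)) = f b - f (a - 1) := by
  refine Int.le_induction
    (motive := fun b _ => ∑ ℓ ∈ Finset.Icc a b, (f ℓ - f (ℓ - 1)) = f b - f (a - 1)) ?_ ?_ b hab
  · simp
  · intro n hn ih
    rw [show Finset.Icc a (n + 1) = insert (n + 1) (Finset.Icc a n) by
        ext x; simp only [Finset.mem_insert, Finset.mem_Icc]; omega,
      Finset.sum_insert (by simp only [Finset.mem_Icc]; omega), ih,
      show n + 1 - 1 = n from by ring]
    ring

lemma sum_bD_zero (N : ℕ) (hN : 1 ≤ N) (u : ℤ → ℝ)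
    (hu : ∀ ℓ : ℤ, u (ℓ + 2 * (N : ℤ)) = u ℓ) :
    ∑ ℓ ∈ idx N, bD N u ℓ = 0 := by
  have h := tel_sum u (-(N : ℤ) + 1) N (by omega)
  have h1 : u (-(N : ℤ) + 1 - 1) = u N := by
    have := hu (-(N : ℤ))
    rw [show -(N : ℤ) + 2 * N = (N : ℤ) from by ring] at this
    rw [show -(N : ℤ) + 1 - 1 = -(N : ℤ) from by ring, ← this]
  simp only [bD, idx, ← Finset.mul_sum]
  rw [h, h1]
  ring

lemma sum_bD_zero' (N : ℕ) (hN : 1 ≤ N) (u : ℤ → ℝ)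
    (hu : ∀ ℓ : ℤ, u (ℓ + 2 * (N : ℤ)) = u ℓ) :
    ∑ ℓ ∈ idx N, bD N u (ℓ + 1) = 0 := by
  have h := tel_sum (fun ℓ => u (ℓ + 1)) (-(N : ℤ) + 1) N (by omega)
  have h1 : u (-(N : ℤ) + 1 - 1 + 1) = u (N + 1) := by
    have := hu (-(N : ℤ) + 1)
    rw [show -(N : ℤ) + 1 + 2 * N = (N : ℤ) + 1 from by ring] at this
    rw [show -(N : ℤ) + 1 - 1 + 1 = -(N : ℤ) + 1 from by ring, ← this]
  have h2 : ∀ ℓ : ℤ, bD N u (ℓ + 1)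
      = (N : ℝ) * ((fun ℓ => u (ℓ + 1)) ℓ - (fun ℓ => u (ℓ + 1)) (ℓ - 1)) := by
    intro ℓ
    simp only [bD, show ∀ ℓ : ℤ, ℓ + 1 - 1 = ℓ from fun ℓ => by ring,
      show ∀ ℓ : ℤ, ℓ - 1 + 1 = ℓ from fun ℓ => by ring]
  simp only [h2, ← Finset.mul_sum, idx]
  rw [h]
  rw [h1]
  ring

theorem stmt6 (N K : ℕ) (hN : 2 ≤ N) (hK1 : 1 ≤ K) (hK2 : K + 2 ≤ N)
    (φ : ℝ → ℝ) (hφ : ContDiffOn ℝ 1 φ (Set.Ioi 0)) (F : ℝ) (hF : 0 < F) :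
    ∀ u ∈ uSet N, dE (Eqnl N K φ) (yF N F) u = 0 := by
  intro u hu
  obtain ⟨hper, _⟩ := hu
  have hNz : (N : ℝ) ≠ 0 := by positivity
  set a : ℤ → ℝ := fun ℓ => bD N u ℓ with ha
  set dF : ℝ := deriv φ F with hdF
  set dG : ℝ := deriv φ (2 * F) with hdG
  -- differentiability of φ at F and 2F
  have hdiff : ∀ p : ℝ, 0 < p → HasDerivAt φ (deriv φ p) p := by
    intro p hp
    have : DifferentiableAt ℝ φ p :=
      ((hφ.differentiableOn one_ne_zero).differentiableAt (Ioi_mem_nhds hp))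
    exact this.hasDerivAt
  have hphiF : HasDerivAt φ dF F := hdiff F hF
  have hphi2F : HasDerivAt φ dG (2 * F) := hdiff (2 * F) (by linarith)
  -- bD of yF + t • u
  have hbd : ∀ (t : ℝ) (ℓ : ℤ), bD N (yF N F + t • u) ℓ = F + t * a ℓ := by
    intro t ℓ
    simp only [bD, yF, ha, Pi.add_apply, Pi.smul_apply, smul_eq_mul]
    push_cast
    field_simp
    ring
  -- generic composition lemma
  have hcomp : ∀ (p c : ℝ), HasDerivAt φ (deriv φ p) p →
      HasDerivAt (fun t : ℝ => φ (p + t * c)) (deriv φ p * c) 0 := by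
    intro p c hp
    have hl : HasDerivAt (fun t : ℝ => p + t * c) c 0 := by
      simpa using ((hasDerivAt_id (0 : ℝ)).mul_const c).const_add p
    have hp' : HasDerivAt φ (deriv φ p) ((fun t : ℝ => p + t * c) 0) := by
      simpa using hp
    simpa [Function.comp_def] using hp'.comp 0 hl
  -- rewrite the energy along the path
  have hEq : (fun t : ℝ => Eqnl N K φ (yF N F + t • u)) =
      (fun t : ℝ => (N : ℝ)⁻¹ * ((∑ ℓ ∈ idx N, φ (F + t * a ℓ))
        + (∑ ℓ ∈ aQnl K, φ (2 * F + t * (a ℓ + a (ℓ + 1))))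
        + ∑ ℓ ∈ idx N \ aQnl K,
            (φ (2 * F + t * (2 * a ℓ)) + φ (2 * F + t * (2 * a (ℓ + 1)))) / 2)) := by
    funext t
    unfold Eqnl
    congr 1
    congr 1
    · congr 1
      · exact Finset.sum_congr rfl fun ℓ _ => by rw [hbd]
      · refine Finset.sum_congr rfl fun ℓ _ => ?_
        rw [hbd, hbd, show F + t * a ℓ + (F + t * a (ℓ + 1))
          = 2 * F + t * (a ℓ + a (ℓ + 1)) from by ring]
    · refine Finset.sum_congr rfl fun ℓ _ => ?_
      rw [hbd, hbd, show 2 * (F + t * a ℓ) = 2 * F + t * (2 * a ℓ) from by ring,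
        show 2 * (F + t * a (ℓ + 1)) = 2 * F + t * (2 * a (ℓ + 1)) from by ring]
  -- derivative of each group of sums
  have h1 : HasDerivAt (fun t : ℝ => ∑ ℓ ∈ idx N, φ (F + t * a ℓ))
      (∑ ℓ ∈ idx N, dF * a ℓ) 0 :=
    HasDerivAt.fun_sum fun ℓ _ => hcomp F (a ℓ) hphiF
  have h2 : HasDerivAt (fun t : ℝ => ∑ ℓ ∈ aQnl K, φ (2 * F + t * (a ℓ + a (ℓ + 1))))
      (∑ ℓ ∈ aQnl K, dG * (a ℓ + a (ℓ + 1))) 0 :=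
    HasDerivAt.fun_sum fun ℓ _ => hcomp (2 * F) (a ℓ + a (ℓ + 1)) hphi2F
  have h3 : HasDerivAt (fun t : ℝ => ∑ ℓ ∈ idx N \ aQnl K,
        (φ (2 * F + t * (2 * a ℓ)) + φ (2 * F + t * (2 * a (ℓ + 1)))) / 2)
      (∑ ℓ ∈ idx N \ aQnl K, (dG * (2 * a ℓ) + dG * (2 * a (ℓ + 1))) / 2) 0 :=
    HasDerivAt.fun_sum fun ℓ _ =>
      ((hcomp (2 * F) (2 * a ℓ) hphi2F).add (hcomp (2 * F) (2 * a (ℓ + 1)) hphi2F)).div_const 2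
  have hkey : HasDerivAt (fun t : ℝ => Eqnl N K φ (yF N F + t • u))
      ((N : ℝ)⁻¹ * ((∑ ℓ ∈ idx N, dF * a ℓ) + (∑ ℓ ∈ aQnl K, dG * (a ℓ + a (ℓ + 1)))
        + ∑ ℓ ∈ idx N \ aQnl K, (dG * (2 * a ℓ) + dG * (2 * a (ℓ + 1))) / 2)) 0 := by
    rw [hEq]
    exact ((h1.add h2).add h3).const_mul _
  -- the derivative value vanishes
  have hS1 : ∑ ℓ ∈ idx N, a ℓ = 0 := sum_bD_zero N (by omega) u hper
  have hS2 : ∑ ℓ ∈ idx N, a (ℓ + 1) = 0 := sum_bD_zero' N (by omega) u hper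
  have hsub : aQnl K ⊆ idx N := by
    intro x hx
    simp only [aQnl, idx, Finset.mem_Icc] at hx ⊢
    omega
  have hzero : (N : ℝ)⁻¹ * ((∑ ℓ ∈ idx N, dF * a ℓ) + (∑ ℓ ∈ aQnl K, dG * (a ℓ + a (ℓ + 1)))
      + ∑ ℓ ∈ idx N \ aQnl K, (dG * (2 * a ℓ) + dG * (2 * a (ℓ + 1))) / 2) = 0 := by
    have e1 : ∑ ℓ ∈ idx N, dF * a ℓ = 0 := by rw [← Finset.mul_sum, hS1, mul_zero]
    have e2 : ∑ ℓ ∈ idx N \ aQnl K, (dG * (2 * a ℓ) + dG * (2 * a (ℓ + 1))) / 2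
        = ∑ ℓ ∈ idx N \ aQnl K, dG * (a ℓ + a (ℓ + 1)) :=
      Finset.sum_congr rfl fun ℓ _ => by ring
    have e3 : (∑ ℓ ∈ idx N \ aQnl K, dG * (a ℓ + a (ℓ + 1)))
        + ∑ ℓ ∈ aQnl K, dG * (a ℓ + a (ℓ + 1))
        = ∑ ℓ ∈ idx N, dG * (a ℓ + a (ℓ + 1)) := Finset.sum_sdiff hsub
    have e4 : ∑ ℓ ∈ idx N, dG * (a ℓ + a (ℓ + 1)) = 0 := by
      simp only [mul_add, Finset.sum_add_distrib, ← Finset.mul_sum, hS1, hS2]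
      ring
    rw [e1, e2]
    rw [show (0 : ℝ) + (∑ ℓ ∈ aQnl K, dG * (a ℓ + a (ℓ + 1)))
        + ∑ ℓ ∈ idx N \ aQnl K, dG * (a ℓ + a (ℓ + 1))
      = (∑ ℓ ∈ idx N \ aQnl K, dG * (a ℓ + a (ℓ + 1)))
        + ∑ ℓ ∈ aQnl K, dG * (a ℓ + a (ℓ + 1)) from by ring, e3, e4, mul_zero]
  rw [dE, hkey.deriv, hzero]
end
end

section
/- Let φ ∈ C²((0,∞); ℝ) and F > 0. Then for every u ∈ 𝒰, E_qnl''(y_F)[u,u] = A_F ‖u'‖²_{ℓ²_ε} − ε³ φ''(2F) Σ_{ℓ=−K−1}^{K+1} |u''_ℓ|². -/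
open Finset Real

noncomputable section

-- auxiliary lemmas for stmt7

lemma idx_shift (N : ℕ) (hN : 1 ≤ N) (g : ℤ → ℝ) (hg : ∀ ℓ : ℤ, g (ℓ + 2 * N) = g ℓ) :
    ∑ ℓ ∈ idx N, g (ℓ + 1) = ∑ ℓ ∈ idx N, g ℓ := by
  have hN' : (1 : ℤ) ≤ (N : ℤ) := by exact_mod_cast hN
  have h1 : ∑ ℓ ∈ idx N, g (ℓ + 1)
      = ∑ ℓ ∈ Finset.Icc (-(N:ℤ) + 1 + 1) ((N:ℤ) + 1), g ℓ := by
    rw [← Finset.map_add_right_Icc (-(N:ℤ) + 1) (N:ℤ) 1, Finset.sum_map]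
    rfl
  have h2 : Finset.Icc (-(N:ℤ) + 1 + 1) ((N:ℤ) + 1)
      = insert ((N:ℤ) + 1) (Finset.Icc (-(N:ℤ) + 2) (N:ℤ)) := by
    ext x; simp only [Finset.mem_Icc, Finset.mem_insert]; omega
  have h3 : idx N = insert (-(N:ℤ) + 1) (Finset.Icc (-(N:ℤ) + 2) (N:ℤ)) := by
    ext x; simp only [idx, Finset.mem_Icc, Finset.mem_insert]; omega
  have h4 : ((N:ℤ) + 1) ∉ Finset.Icc (-(N:ℤ) + 2) (N:ℤ) := by
    simp only [Finset.mem_Icc]; omega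
  have h5 : (-(N:ℤ) + 1) ∉ Finset.Icc (-(N:ℤ) + 2) (N:ℤ)  := by
    simp only [Finset.mem_Icc]; omega
  have h6 : g ((N:ℤ) + 1) = g (-(N:ℤ) + 1) := by
    rw [show (N:ℤ) + 1 = (-(N:ℤ) + 1) + 2 * N by ring, hg]
  rw [h1, h2, h3, Finset.sum_insert h4, Finset.sum_insert h5, h6]

lemma eventually_pos_aux (c σ : ℝ) (hc : 0 < c) :
    ∀ᶠ r in nhds (0 : ℝ), 0 < c + r * σ := by
  have hcont : ContinuousAt (fun r : ℝ => c + r * σ) 0 := by fun_prop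
  have h0 : (0 : ℝ) < c + 0 * σ := by simpa using hc
  have := hcont.eventually_mem (isOpen_Ioi.mem_nhds (by simpa using h0))
  simpa [Set.mem_Ioi] using this

lemma leaf1 {φ : ℝ → ℝ} (hd : DifferentiableOn ℝ φ (Set.Ioi 0)) (c σ r : ℝ)
    (h : 0 < c + r * σ) :
    HasDerivAt (fun r => φ (c + r * σ)) (deriv φ (c + r * σ) * σ) r := by
  have h1 : HasDerivAt (fun r : ℝ => c + r * σ) σ r := by
    simpa using ((hasDerivAt_id r).mul_const σ).const_add c
  have h2 : DifferentiableAt ℝ φ (c + r * σ) :=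
    (hd (c + r * σ) h).differentiableAt (isOpen_Ioi.mem_nhds h)
  exact h2.hasDerivAt.comp r h1

lemma leaf2 {ψ : ℝ → ℝ} (hd : DifferentiableOn ℝ ψ (Set.Ioi 0)) (c σ : ℝ)
    (hc : 0 < c) :
    HasDerivAt (fun r => ψ (c + r * σ) * σ) (deriv ψ c * σ * σ) 0 := by
  have := (leaf1 hd c σ 0 (by simpa using hc)).mul_const σ
  simpa using this


theorem stmt7 (N K : ℕ) (hN : 2 ≤ N) (hK1 : 1 ≤ K) (hK2 : K + 2 ≤ N)
    (φ : ℝ → ℝ) (hφ : ContDiffOn ℝ 2 φ (Set.Ioi 0)) (F : ℝ) (hF : 0 < F) :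
    ∀ u ∈ uSet N,
      d2E (Eqnl N K φ) (yF N F) u u
        = (deriv (deriv φ) F + 4 * deriv (deriv φ) (2 * F)) * (nl2 N (bD N u)) ^ 2
          - (N : ℝ)⁻¹ ^ 3 * deriv (deriv φ) (2 * F) * ∑ ℓ ∈ aQnl K, (cD2 N u ℓ) ^ 2 := by
  intro u hu
  obtain ⟨hper, -⟩ := hu
  have hN0 : (0 : ℝ) < (N : ℝ) := by
    have : 0 < N := by omega
    exact_mod_cast this
  have hNne : (N : ℝ) ≠ 0 := ne_of_gt hN0
  set a : ℤ → ℝ := bD N u with ha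
  have haper : ∀ ℓ : ℤ, a (ℓ + 2 * N) = a ℓ := by
    intro ℓ
    simp only [ha, bD]
    rw [show ℓ + 2 * (N : ℤ) - 1 = (ℓ - 1) + 2 * N by ring, hper, hper]
  have hbD : ∀ (r : ℝ) (ℓ : ℤ), bD N (yF N F + r • u) ℓ = F + r * a ℓ := by
    intro r ℓ
    simp only [ha, bD, yF, Pi.add_apply, Pi.smul_apply, smul_eq_mul]
    push_cast
    field_simp
    ring
  have hd1 : DifferentiableOn ℝ φ (Set.Ioi 0) := hφ.differentiableOn (by norm_num)
  have hφ' : ContDiffOn ℝ 1 (deriv φ) (Set.Ioi 0) :=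
    hφ.deriv_of_isOpen isOpen_Ioi (by norm_num)
  have hd2 : DifferentiableOn ℝ (deriv φ) (Set.Ioi 0) := hφ'.differentiableOn (by norm_num)
  set Gnice : ℝ → ℝ := fun r =>
    (N : ℝ)⁻¹ * ((∑ ℓ ∈ idx N, φ (F + r * a ℓ))
      + (∑ ℓ ∈ aQnl K, φ (2 * F + r * (a ℓ + a (ℓ + 1))))
      + ∑ ℓ ∈ idx N \ aQnl K,
          (φ (2 * F + r * (2 * a ℓ)) + φ (2 * F + r * (2 * a (ℓ + 1)))) / 2) with hGdef
  have hGf : ∀ r : ℝ, Eqnl N K φ (yF N F + r • u) = Gnice r := by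
    intro r
    simp only [Eqnl, hbD, hGdef]
    congr 1
    congr 1
    · congr 1
      exact Finset.sum_congr rfl fun ℓ _ => by
        rw [show (F + r * a ℓ) + (F + r * a (ℓ + 1))
            = 2 * F + r * (a ℓ + a (ℓ + 1)) by ring]
    · exact Finset.sum_congr rfl fun ℓ _ => by
        rw [show 2 * (F + r * a ℓ) = 2 * F + r * (2 * a ℓ) by ring,
          show 2 * (F + r * a (ℓ + 1)) = 2 * F + r * (2 * a (ℓ + 1)) by ring]
  have hstep1 : ∀ s : ℝ,
      (fun t : ℝ => Eqnl N K φ (yF N F + s • u + t • u)) = fun t => Gnice (s + t) := by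
    intro s; funext t
    rw [show yF N F + s • u + t • u = yF N F + (s + t) • u by
      rw [add_smul, add_assoc]]
    exact hGf (s + t)
  have hstep2 : d2E (Eqnl N K φ) (yF N F) u u = deriv (deriv Gnice) 0 := by
    simp only [d2E]
    have h : (fun s : ℝ => deriv (fun t : ℝ => Eqnl N K φ (yF N F + s • u + t • u)) 0)
        = fun s => deriv Gnice s := by
      funext s
      rw [hstep1 s, deriv_comp_const_add Gnice s 0, add_zero]
    rw [h]

  have hposall : ∀ᶠ r in nhds (0 : ℝ),
      (∀ ℓ ∈ idx N, 0 < F + r * a ℓ)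
      ∧ (∀ ℓ ∈ aQnl K, 0 < 2 * F + r * (a ℓ + a (ℓ + 1)))
      ∧ (∀ ℓ ∈ idx N \ aQnl K,
          0 < 2 * F + r * (2 * a ℓ) ∧ 0 < 2 * F + r * (2 * a (ℓ + 1))) := by
    refine Filter.Eventually.and ?_ (Filter.Eventually.and ?_ ?_)
    · rw [Filter.eventually_all_finset]
      intro ℓ _; exact eventually_pos_aux F (a ℓ) hF
    · rw [Filter.eventually_all_finset]
      intro ℓ _; exact eventually_pos_aux (2 * F) _ (by linarith)
    · rw [Filter.eventually_all_finset]
      intro ℓ _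
      exact (eventually_pos_aux (2 * F) _ (by linarith)).and
        (eventually_pos_aux (2 * F) _ (by linarith))
  set G1 : ℝ → ℝ := fun r =>
    (N : ℝ)⁻¹ * ((∑ ℓ ∈ idx N, deriv φ (F + r * a ℓ) * a ℓ)
      + (∑ ℓ ∈ aQnl K, deriv φ (2 * F + r * (a ℓ + a (ℓ + 1))) * (a ℓ + a (ℓ + 1)))
      + ∑ ℓ ∈ idx N \ aQnl K,
          (deriv φ (2 * F + r * (2 * a ℓ)) * (2 * a ℓ)
            + deriv φ (2 * F + r * (2 * a (ℓ + 1))) * (2 * a (ℓ + 1))) / 2) with hG1def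
  have hder : ∀ᶠ r in nhds (0 : ℝ), HasDerivAt Gnice (G1 r) r := by
    filter_upwards [hposall] with r hr
    obtain ⟨h1, h2, h3⟩ := hr
    rw [hGdef, hG1def]
    refine HasDerivAt.const_mul _ (HasDerivAt.add (HasDerivAt.add ?_ ?_) ?_)
    · exact HasDerivAt.fun_sum fun ℓ hℓ => leaf1 hd1 F (a ℓ) r (h1 ℓ hℓ)
    · exact HasDerivAt.fun_sum fun ℓ hℓ => leaf1 hd1 (2 * F) _ r (h2 ℓ hℓ)
    · exact HasDerivAt.fun_sum fun ℓ hℓ =>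
        ((leaf1 hd1 (2 * F) _ r (h3 ℓ hℓ).1).add
          (leaf1 hd1 (2 * F) _ r (h3 ℓ hℓ).2)).div_const 2
  have hEe : deriv Gnice =ᶠ[nhds (0 : ℝ)] G1 := hder.mono fun r hr => hr.deriv
  set c1 := deriv (deriv φ) F with hc1
  set c2 := deriv (deriv φ) (2 * F) with hc2
  set D : ℝ := (N : ℝ)⁻¹ * ((∑ ℓ ∈ idx N, c1 * a ℓ * a ℓ)
      + (∑ ℓ ∈ aQnl K, c2 * (a ℓ + a (ℓ + 1)) * (a ℓ + a (ℓ + 1)))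
      + ∑ ℓ ∈ idx N \ aQnl K,
          (c2 * (2 * a ℓ) * (2 * a ℓ) + c2 * (2 * a (ℓ + 1)) * (2 * a (ℓ + 1))) / 2)
    with hDdef
  have hD : HasDerivAt G1 D 0 := by
    rw [hG1def, hDdef]
    refine HasDerivAt.const_mul _ (HasDerivAt.add (HasDerivAt.add ?_ ?_) ?_)
    · exact HasDerivAt.fun_sum fun ℓ _ => leaf2 hd2 F (a ℓ) hF
    · exact HasDerivAt.fun_sum fun ℓ _ => leaf2 hd2 (2 * F) _ (by linarith)
    · exact HasDerivAt.fun_sum fun ℓ _ =>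
        ((leaf2 hd2 (2 * F) _ (by linarith)).add
          (leaf2 hd2 (2 * F) _ (by linarith))).div_const 2
  have hfinal : d2E (Eqnl N K φ) (yF N F) u u = D := by
    rw [hstep2, hEe.deriv_eq, hD.deriv]
  rw [hfinal]
  -- now pure algebra
  set S := ∑ ℓ ∈ idx N, (a ℓ) ^ 2 with hS
  have hnl2 : (nl2 N a) ^ 2 = (N : ℝ)⁻¹ * S := by
    rw [nl2, hS]
    exact Real.sq_sqrt (by positivity)
  have hshift : ∑ ℓ ∈ idx N, (a (ℓ + 1)) ^ 2 = S :=
    idx_shift N (by omega) (fun ℓ => (a ℓ) ^ 2) (fun ℓ => by simp only [haper])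
  have hsub : aQnl K ⊆ idx N := by
    intro x hx
    simp only [aQnl, idx, Finset.mem_Icc] at *
    omega
  have hcd2 : ∀ ℓ : ℤ, cD2 N u ℓ = (N : ℝ) * (a (ℓ + 1) - a ℓ) := by
    intro ℓ
    simp only [cD2, ha, bD, add_sub_cancel_right]
    ring
  have e1 : ∑ ℓ ∈ idx N, c1 * a ℓ * a ℓ = c1 * S := by
    rw [hS, Finset.mul_sum]
    exact Finset.sum_congr rfl fun ℓ _ => by ring
  have e3 : ∑ ℓ ∈ idx N \ aQnl K,
        (c2 * (2 * a ℓ) * (2 * a ℓ) + c2 * (2 * a (ℓ + 1)) * (2 * a (ℓ + 1))) / 2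
      = (∑ ℓ ∈ idx N, (2 * c2 * (a ℓ) ^ 2 + 2 * c2 * (a (ℓ + 1)) ^ 2))
        - ∑ ℓ ∈ aQnl K, (2 * c2 * (a ℓ) ^ 2 + 2 * c2 * (a (ℓ + 1)) ^ 2) := by
    rw [← Finset.sum_sdiff_eq_sub hsub]
    exact Finset.sum_congr rfl fun ℓ _ => by ring
  have e4 : ∑ ℓ ∈ idx N, (2 * c2 * (a ℓ) ^ 2 + 2 * c2 * (a (ℓ + 1)) ^ 2)
      = 4 * c2 * S := by
    rw [Finset.sum_add_distrib, ← Finset.mul_sum, ← Finset.mul_sum, hshift, ← hS]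
    ring
  have e5 : (∑ ℓ ∈ aQnl K, c2 * (a ℓ + a (ℓ + 1)) * (a ℓ + a (ℓ + 1)))
        - ∑ ℓ ∈ aQnl K, (2 * c2 * (a ℓ) ^ 2 + 2 * c2 * (a (ℓ + 1)) ^ 2)
      = -(c2 * (N : ℝ)⁻¹ ^ 2 * ∑ ℓ ∈ aQnl K, (cD2 N u ℓ) ^ 2) := by
    rw [← Finset.sum_sub_distrib, Finset.mul_sum, ← Finset.sum_neg_distrib]
    refine Finset.sum_congr rfl fun ℓ _ => ?_
    rw [hcd2 ℓ]
    field_simp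
    ring
  rw [hDdef, e1, e3, e4]
  rw [hnl2]
  linear_combination (N : ℝ)⁻¹ * e5
end
end
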